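/- arXiv:1410.3858 — 6 statements merged into one kernel-verified Lean document; each statement's English description precedes it below -/
import Mathlib

section
/- Let ψ : [1,∞) → (0,∞) be a positive, continuous, convex, decreasing function tending to 0 at infinity, let 1 < s < ∞ with 1/s + 1/s' = 1, and suppose Σ_{k=1}^∞ ψ(k)^s k^{s-2} < ∞. Let g(t) = ψ(t)·t^{1/s'} and suppose there is α > 0 such that g(t)/(t·|g'(t+0)|) ≥ α for all t ≥ n. Then ψ(n)^s · n^{s-1} ≤ (s/α) · Σ_{k=n}^∞ ψ(k)^s k^{s-2}. -/
open Set Filter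

lemma aux_rpow_tangent {a b s : ℝ} (ha : 0 < a) (hb : 0 ≤ b) (hs : 1 ≤ s) :
    a ^ s - b ^ s ≤ s * a ^ (s - 1) * (a - b) := by
  have hx : -1 ≤ b / a - 1 := by
    have : 0 ≤ b / a := div_nonneg hb ha.le
    linarith
  have h := one_add_mul_self_le_rpow_one_add hx hs
  have h1 : (1 : ℝ) + (b / a - 1) = b / a := by ring
  rw [h1] at h
  have h2 := mul_le_mul_of_nonneg_right h (Real.rpow_nonneg ha.le s)
  have h3 : (b / a) ^ s * a ^ s = b ^ s := by
    rw [← Real.mul_rpow (div_nonneg hb ha.le) ha.le, div_mul_cancel₀ _ ha.ne']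
  have haa : a ^ s = a ^ (s - 1) * a := by
    rw [← Real.rpow_add_one ha.ne' (s - 1)]; ring_nf
  have e : (1 + s * (b / a - 1)) * a ^ s = a ^ s + s * (b - a) * a ^ (s - 1) := by
    rw [haa]; field_simp
  rw [h3, e] at h2
  nlinarith [h2]

lemma aux_exists_small (c F : ℕ → ℝ) (n : ℕ) (hn : 1 ≤ n)
    (hc : Summable c) (hcF : ∀ m, c m = F m / ((n + m : ℕ) : ℝ)) {ε : ℝ} (hε : 0 < ε) :
    ∃ m, F m < ε := by
  by_contra h
  push_neg at h
  have hpos : ∀ m : ℕ, (0 : ℝ) < ((n + m : ℕ) : ℝ) := fun m => by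
    exact_mod_cast Nat.lt_of_lt_of_le Nat.zero_lt_one (le_trans hn (Nat.le_add_right n m))
  have hsum' : Summable (fun m => ε / ((n + m : ℕ) : ℝ)) := by
    refine Summable.of_nonneg_of_le (fun m => div_nonneg hε.le (hpos m).le) (fun m => ?_) hc
    rw [hcF m]
    exact div_le_div_of_nonneg_right (h m) (hpos m).le
  have h2 : Summable (fun m => ((n + m : ℕ) : ℝ)⁻¹) := by
    refine (hsum'.mul_left ε⁻¹).congr fun m => ?_
    field_simp
  have h3 : Summable (fun m => ((m + n : ℕ) : ℝ)⁻¹) :=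
    h2.congr fun m => by rw [Nat.add_comm]
  exact Real.not_summable_natCast_inv ((summable_nat_add_iff n).1 h3)

/-- Lemma 1 (upper part): for `ψ` positive, continuous, convex, decreasing, tending to 0,
with `∑ ψ(k)^s k^(s-2) < ∞`, if `g(t) = ψ(t) t^(1/s')` has characteristic
`α(g;t) = g(t)/(t |g'(t+0)|) ≥ α` for `t ≥ n`, then
`ψ(n)^s n^(s-1) ≤ (s/α) ∑_{k=n}^∞ ψ(k)^s k^(s-2)`. -/
theorem stmt_0 (ψ : ℝ → ℝ) (s s' : ℝ) (hs : 1 < s) (hss' : 1 / s + 1 / s' = 1)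
    (hψpos : ∀ t ∈ Ici (1 : ℝ), 0 < ψ t)
    (hψcont : ContinuousOn ψ (Ici (1 : ℝ)))
    (hψconv : ConvexOn ℝ (Ici (1 : ℝ)) ψ)
    (hψdec : AntitoneOn ψ (Ici (1 : ℝ)))
    (hψ0 : Tendsto ψ atTop (nhds 0))
    (hsum : Summable (fun k : ℕ => ψ k ^ s * (k : ℝ) ^ (s - 2)))
    (n : ℕ) (hn : 1 ≤ n) (α : ℝ) (hα : 0 < α)
    (g : ℝ → ℝ) (hg : ∀ t, g t = ψ t * t ^ (1 / s'))
    (hαg : ∀ t : ℝ, (n : ℝ) ≤ t →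
      α ≤ g t / (t * |derivWithin g (Ici t) t|)) :
    ψ n ^ s * (n : ℝ) ^ (s - 1) ≤
      (s / α) * ∑' k : ℕ, ψ (n + k) ^ s * ((n + k : ℕ) : ℝ) ^ (s - 2) := by
  have hs0 : (0 : ℝ) < s := lt_trans one_pos hs
  have hsne : s ≠ 0 := ne_of_gt hs0
  have hinvs : 1 / s < 1 := (div_lt_one hs0).2 hs
  have hinvs0 : 0 < 1 / s := by positivity
  have h1s' : 1 / s' = 1 - 1 / s := by linarith
  have hs'pos : 0 < 1 / s' := by rw [h1s']; linarith
  have hnR : (1 : ℝ) ≤ (n : ℝ) := by exact_mod_cast hn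
  have hgpos : ∀ t : ℝ, 1 ≤ t → 0 < g t := by
    intro t ht
    rw [hg]
    exact mul_pos (hψpos t ht) (Real.rpow_pos_of_pos (lt_of_lt_of_le one_pos ht) _)
  have hrpowdiv : ∀ t : ℝ, 0 < t → t ^ (1 / s') / t = t ^ (1 / s' - 1) := by
    intro t ht
    rw [Real.rpow_sub ht, Real.rpow_one]
  -- monotonicity of g t / t
  have hgdiv : ∀ x y : ℝ, 1 ≤ x → x ≤ y → g y / y ≤ g x / x := by
    intro x y hx hxy
    have hx0 : (0 : ℝ) < x := lt_of_lt_of_le one_pos hx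
    have hy0 : (0 : ℝ) < y := lt_of_lt_of_le hx0 hxy
    have hy1 : (1 : ℝ) ≤ y := le_trans hx hxy
    rw [hg x, hg y, mul_div_assoc, mul_div_assoc, hrpowdiv x hx0, hrpowdiv y hy0]
    have hexp : 1 / s' - 1 ≤ 0 := by rw [h1s']; linarith
    exact mul_le_mul (hψdec hx hy1 hxy)
      (Real.rpow_le_rpow_of_nonpos hx0 hxy hexp)
      (Real.rpow_nonneg hy0.le _) (hψpos x hx).le
  -- decrement bound from the characteristic condition
  have hstep : ∀ k : ℕ, n ≤ k → g k - g ((k : ℝ) + 1) ≤ g k / (α * k) := by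
    intro k hk
    have hkR : (n : ℝ) ≤ (k : ℝ) := by exact_mod_cast hk
    have hk1 : (1 : ℝ) ≤ (k : ℝ) := le_trans hnR hkR
    have hk0 : (0 : ℝ) < (k : ℝ) := lt_of_lt_of_le one_pos hk1
    have hder : ∀ x ∈ Ico (k : ℝ) ((k : ℝ) + 1),
        HasDerivWithinAt g (derivWithin g (Ici x) x) (Ici x) x ∧
        ‖derivWithin g (Ici x) x‖ ≤ g k / (α * k) := by
      intro x hx
      have hxk : (k : ℝ) ≤ x := hx.1
      have hxn : (n : ℝ) ≤ x := le_trans hkR hxk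
      have hx1 : (1 : ℝ) ≤ x := le_trans hk1 hxk
      have hx0 : (0 : ℝ) < x := lt_of_lt_of_le one_pos hx1
      have hαx := hαg x hxn
      have hDne : derivWithin g (Ici x) x ≠ 0 := by
        intro h0
        rw [h0] at hαx
        simp at hαx
        linarith
      have hdiff : DifferentiableWithinAt ℝ g (Ici x) x := by
        by_contra hnd
        exact hDne (derivWithin_zero_of_not_differentiableWithinAt hnd)
      have habs : 0 < x * |derivWithin g (Ici x) x| := mul_pos hx0 (abs_pos.2 hDne)
      have hb1 : α * (x * |derivWithin g (Ici x) x|) ≤ g x := (le_div_iff₀ habs).1 hαx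
      have hb2 : |derivWithin g (Ici x) x| ≤ g x / (α * x) := by
        rw [le_div_iff₀ (mul_pos hα hx0)]
        nlinarith [hb1]
      have hb3 : g x / (α * x) ≤ g k / (α * k) := by
        have h4 := hgdiv k x hk1 hxk
        rw [mul_comm α x, mul_comm α (k : ℝ), ← div_div, ← div_div]
        exact div_le_div_of_nonneg_right h4 hα.le
      exact ⟨hdiff.hasDerivWithinAt, by rw [Real.norm_eq_abs]; exact hb2.trans hb3⟩
    have hcont : ContinuousOn g (Icc (k : ℝ) ((k : ℝ) + 1)) := by
      have hgeq : g = fun t => ψ t * t ^ (1 / s') := funext hg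
      rw [hgeq]
      refine ContinuousOn.mul (hψcont.mono ?_)
        (continuousOn_id.rpow_const fun x _ => Or.inr hs'pos.le)
      intro x hx
      exact le_trans hk1 hx.1
    have hmv := norm_image_sub_le_of_norm_deriv_right_le_segment hcont
      (fun x hx => (hder x hx).1) (fun x hx => (hder x hx).2)
      ((k : ℝ) + 1) (right_mem_Icc.2 (by linarith))
    rw [Real.norm_eq_abs] at hmv
    have he1 : (k : ℝ) + 1 - (k : ℝ) = 1 := by ring
    rw [he1, mul_one] at hmv
    have h5 : g ((k : ℝ)) - g ((k : ℝ) + 1) ≤ |g ((k : ℝ) + 1) - g (k : ℝ)| := by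
      rw [abs_sub_comm]
      exact le_abs_self _
    linarith
  -- identity g t ^ s = ψ t ^ s * t ^ (s - 1)
  have hgid : ∀ t : ℝ, 1 ≤ t → g t ^ s = ψ t ^ s * t ^ (s - 1) := by
    intro t ht
    have ht0 : (0 : ℝ) < t := lt_of_lt_of_le one_pos ht
    rw [hg, Real.mul_rpow (hψpos t ht).le (Real.rpow_nonneg ht0.le _),
      ← Real.rpow_mul ht0.le]
    congr 1
    rw [h1s']
    field_simp
  -- set up the sequences
  set c : ℕ → ℝ := fun j => ψ (↑n + ↑j) ^ s * ((n + j : ℕ) : ℝ) ^ (s - 2) with hcdef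
  set F : ℕ → ℝ := fun j => g (((n + j : ℕ) : ℝ)) ^ s with hFdef
  have hnj1 : ∀ j : ℕ, (1 : ℝ) ≤ ((n + j : ℕ) : ℝ) := by
    intro j
    exact_mod_cast le_trans hn (Nat.le_add_right n j)
  have hnj0 : ∀ j : ℕ, (0 : ℝ) < ((n + j : ℕ) : ℝ) := fun j => lt_of_lt_of_le one_pos (hnj1 j)
  have hcpos : ∀ j, 0 ≤ c j := by
    intro j
    have : (1 : ℝ) ≤ (↑n + ↑j : ℝ) := by push_cast at hnj1 ⊢; exact hnj1 j
    exact mul_nonneg (Real.rpow_nonneg (hψpos _ this).le _) (Real.rpow_nonneg (hnj0 j).le _)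
  have hcsum : Summable c := by
    have h6 := (summable_nat_add_iff n).2 hsum
    refine h6.congr fun j => ?_
    rw [Nat.add_comm j n]
    simp only [hcdef]
    push_cast
    ring
  have hcF : ∀ m, c m = F m / ((n + m : ℕ) : ℝ) := by
    intro m
    show ψ (↑n + ↑m) ^ s * ((n + m : ℕ) : ℝ) ^ (s - 2)
        = g (((n + m : ℕ) : ℝ)) ^ s / ((n + m : ℕ) : ℝ)
    rw [hgid _ (hnj1 m), eq_div_iff (hnj0 m).ne']
    rw [mul_assoc, ← Real.rpow_add_one (hnj0 m).ne' (s - 2)]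
    have h8 : s - 2 + 1 = s - 1 := by ring
    rw [h8]
    push_cast
    ring
  -- one step of the discrete inequality
  have hFstep : ∀ j : ℕ, F j ≤ F (j + 1) + (s / α) * c j := by
    intro j
    have h1 := hstep (n + j) (Nat.le_add_right n j)
    have hX1 : (1 : ℝ) ≤ ((n + j : ℕ) : ℝ) := hnj1 j
    have hX0 : (0 : ℝ) < ((n + j : ℕ) : ℝ) := hnj0 j
    have hgX := hgpos _ hX1
    have hgX1 := hgpos (((n + j : ℕ) : ℝ) + 1) (by linarith)
    have ht := aux_rpow_tangent hgX hgX1.le hs.le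
    have hb : s * g ((n + j : ℕ) : ℝ) ^ (s - 1) * (g ((n + j : ℕ) : ℝ) - g (((n + j : ℕ) : ℝ) + 1))
        ≤ s * g ((n + j : ℕ) : ℝ) ^ (s - 1) * (g ((n + j : ℕ) : ℝ) / (α * ((n + j : ℕ) : ℝ))) := by
      refine mul_le_mul_of_nonneg_left h1 ?_
      positivity
    have he : s * g ((n + j : ℕ) : ℝ) ^ (s - 1) * (g ((n + j : ℕ) : ℝ) / (α * ((n + j : ℕ) : ℝ)))
        = (s / α) * (g ((n + j : ℕ) : ℝ) ^ s / ((n + j : ℕ) : ℝ)) := by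
      have h9 : g ((n + j : ℕ) : ℝ) ^ (s - 1) * g ((n + j : ℕ) : ℝ) = g ((n + j : ℕ) : ℝ) ^ s := by
        rw [← Real.rpow_add_one hgX.ne' (s - 1)]
        ring_nf
      rw [← h9]
      field_simp
    have hceq : c j = g ((n + j : ℕ) : ℝ) ^ s / ((n + j : ℕ) : ℝ) := by
      rw [hcF j]
    have hF1 : F (j + 1) = g (((n + j : ℕ) : ℝ) + 1) ^ s := by
      simp only [hFdef]
      congr 2
      push_cast
      ring
    have hF0 : F j = g ((n + j : ℕ) : ℝ) ^ s := rfl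
    rw [hF0, hF1, hceq]
    linarith [hb.trans_eq he, ht]
  -- telescoping
  have htel : ∀ m : ℕ, F 0 ≤ F m + (s / α) * ∑ j ∈ Finset.range m, c j := by
    intro m
    induction m with
    | zero => simp
    | succ m ih =>
      rw [Finset.sum_range_succ, mul_add]
      linarith [hFstep m]
  have hsumle : ∀ m : ℕ, ∑ j ∈ Finset.range m, c j ≤ ∑' j, c j := fun m =>
    Summable.sum_le_tsum _ (fun j _ => hcpos j) hcsum
  have hL : ψ (n : ℝ) ^ s * (n : ℝ) ^ (s - 1) = F 0 := by
    simp only [hFdef]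
    rw [hgid _ (by simpa using hnR)]
    norm_num
  rw [hL]
  refine le_of_forall_pos_le_add fun ε hε => ?_
  obtain ⟨m, hm⟩ := aux_exists_small c F n hn hcsum hcF hε
  have h10 := htel m
  have h11 : (s / α) * ∑ j ∈ Finset.range m, c j ≤ (s / α) * ∑' j, c j :=
    mul_le_mul_of_nonneg_left (hsumle m) (by positivity)
  linarith
end

section
/- Let ψ : [1,∞) → (0,∞) be a positive, continuous, convex, decreasing function with Σ_{k=1}^∞ ψ(k) < ∞. Let g(t) = ψ(t)·t and suppose there is α > 0 such that g(t)/(t·|g'(t+0)|) ≥ α for all t ≥ n. Then ψ(n)·n ≤ (1/α) · Σ_{k=n}^∞ ψ(k). -/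
open Set Filter

/-- Lemma 2 (upper part): for `ψ` positive, continuous, convex, decreasing with
`∑ ψ(k) < ∞`, if `g(t) = ψ(t) t` satisfies `g(t)/(t |g'(t+0)|) ≥ α` for `t ≥ n`, then
`ψ(n) n ≤ (1/α) ∑_{k=n}^∞ ψ(k)`. -/
theorem stmt_1 (ψ : ℝ → ℝ)
    (hψpos : ∀ t ∈ Ici (1 : ℝ), 0 < ψ t)
    (hψcont : ContinuousOn ψ (Ici (1 : ℝ)))
    (hψconv : ConvexOn ℝ (Ici (1 : ℝ)) ψ)
    (hψdec : AntitoneOn ψ (Ici (1 : ℝ)))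
    (hsum : Summable (fun k : ℕ => ψ k))
    (n : ℕ) (hn : 1 ≤ n) (α : ℝ) (hα : 0 < α)
    (g : ℝ → ℝ) (hg : ∀ t, g t = ψ t * t)
    (hαg : ∀ t : ℝ, (n : ℝ) ≤ t →
      α ≤ g t / (t * |derivWithin g (Ici t) t|)) :
    ψ n * (n : ℝ) ≤ (1 / α) * ∑' k : ℕ, ψ (n + k) := by
  have hn1 : (1 : ℝ) ≤ (n : ℝ) := by exact_mod_cast hn
  -- the function g is continuous on [1, ∞)
  have hgeq : g = fun t => ψ t * t := funext hg
  have hgc : ContinuousOn g (Ici (1 : ℝ)) := by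
    rw [hgeq]; exact hψcont.mul continuousOn_id
  have hψnn : ∀ t : ℝ, 1 ≤ t → 0 ≤ ψ t := fun t ht => (hψpos t ht).le
  -- key pointwise fact about the right derivative
  have key : ∀ t : ℝ, (n : ℝ) ≤ t →
      HasDerivWithinAt g (derivWithin g (Ici t) t) (Ici t) t ∧
      |derivWithin g (Ici t) t| ≤ ψ t / α := by
    intro t ht
    have ht1 : (1 : ℝ) ≤ t := hn1.trans ht
    have htpos : (0 : ℝ) < t := lt_of_lt_of_le one_pos ht1
    have hgt : 0 < g t := by rw [hg]; exact mul_pos (hψpos t ht1) htpos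
    have hαt := hαg t ht
    have hdne : derivWithin g (Ici t) t ≠ 0 := by
      intro h0
      rw [h0] at hαt
      simp at hαt
      linarith
    have hdiff : DifferentiableWithinAt ℝ g (Ici t) t := by
      by_contra h
      exact hdne (derivWithin_zero_of_not_differentiableWithinAt h)
    set d := derivWithin g (Ici t) t with hd
    have habs : 0 < t * |d| := mul_pos htpos (abs_pos.mpr hdne)
    have h2 : α * (t * |d|) ≤ g t := (le_div_iff₀ habs).mp hαt
    rw [hg] at h2
    have h3 : α * |d| ≤ ψ t := by nlinarith [abs_nonneg d]
    refine ⟨hdiff.hasDerivWithinAt, ?_⟩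
    rw [le_div_iff₀ hα]
    linarith
  -- per-interval decrement bound
  have step : ∀ k : ℕ, n ≤ k → g k - g ((k : ℝ) + 1) ≤ ψ k / α := by
    intro k hk
    have hkn : (n : ℝ) ≤ (k : ℝ) := by exact_mod_cast hk
    have hk1 : (1 : ℝ) ≤ (k : ℝ) := hn1.trans hkn
    have hcont : ContinuousOn g (Icc (k : ℝ) ((k : ℝ) + 1)) :=
      hgc.mono (fun x hx => le_trans hk1 hx.1)
    have hder : ∀ x ∈ Ico (k : ℝ) ((k : ℝ) + 1),
        HasDerivWithinAt g (derivWithin g (Ici x) x) (Ici x) x :=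
      fun x hx => (key x (hkn.trans hx.1)).1
    have hbound : ∀ x ∈ Ico (k : ℝ) ((k : ℝ) + 1),
        ‖derivWithin g (Ici x) x‖ ≤ ψ k / α := by
      intro x hx
      have hx1 : (1 : ℝ) ≤ x := hk1.trans hx.1
      have h1 := (key x (hkn.trans hx.1)).2
      have h2 : ψ x ≤ ψ k := hψdec hk1 hx1 hx.1
      calc ‖derivWithin g (Ici x) x‖ = |derivWithin g (Ici x) x| := rfl
        _ ≤ ψ x / α := h1
        _ ≤ ψ k / α := (div_le_div_iff_of_pos_right hα).mpr h2
    have hmvt := norm_image_sub_le_of_norm_deriv_right_le_segment hcont hder hbound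
      ((k : ℝ) + 1) (Set.right_mem_Icc.mpr (by linarith))
    have h4 : |g ((k : ℝ) + 1) - g k| ≤ ψ k / α := by
      simpa using hmvt
    have h5 := abs_le.mp h4
    linarith [h5.1, h5.2]
  -- telescoping
  have tel : ∀ N : ℕ, n ≤ N → g n - g N ≤ ∑ k ∈ Finset.Ico n N, ψ k / α := by
    intro N hN
    induction N, hN using Nat.le_induction with
    | base => simp
    | succ N hN ih =>
      have hstep := step N hN
      have hc : ((N : ℝ) + 1) = ((N + 1 : ℕ) : ℝ) := by push_cast; ring
      rw [Finset.sum_Ico_succ_top hN]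
      rw [hc] at hstep
      linarith
  -- summability of the shifted sequence and nonnegativity
  have hsum2 : Summable (fun j : ℕ => ψ ((n : ℝ) + (j : ℝ))) := by
    have h := (summable_nat_add_iff (f := fun k : ℕ => ψ k) n).mpr hsum
    refine h.congr fun j => ?_
    push_cast
    ring_nf
  have hnn2 : ∀ j : ℕ, 0 ≤ ψ ((n : ℝ) + (j : ℝ)) := by
    intro j
    apply hψnn
    have : (0 : ℝ) ≤ (j : ℝ) := Nat.cast_nonneg j
    linarith
  set S : ℝ := ∑' k : ℕ, ψ ((n : ℝ) + (k : ℝ)) with hS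
  have hSnn : 0 ≤ S := tsum_nonneg hnn2
  -- partial sums are bounded by S
  have hpart : ∀ N : ℕ, ∑ k ∈ Finset.Ico n N, ψ k ≤ S := by
    intro N
    have h : ∑ k ∈ Finset.Ico n N, ψ (k : ℝ)
        = ∑ j ∈ Finset.range (N - n), ψ ((n : ℝ) + (j : ℝ)) := by
      rw [Finset.sum_Ico_eq_sum_range]
      refine Finset.sum_congr rfl fun j _ => ?_
      push_cast; ring_nf
    rw [h]
    exact Summable.sum_le_tsum _ (fun j _ => hnn2 j) hsum2
  -- ε-argument
  have main : ∀ ε : ℝ, 0 < ε → ψ n * (n : ℝ) ≤ 1 / α * S + ε := by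
    intro ε hε
    have htail : Tendsto (fun i : ℕ => ∑' k : ℕ, ψ (((k + i : ℕ)) : ℝ)) atTop (nhds 0) :=
      tendsto_sum_nat_add (fun k : ℕ => ψ (k : ℝ))
    have hev : ∀ᶠ i : ℕ in atTop, ∑' k : ℕ, ψ (((k + i : ℕ)) : ℝ) < ε / 2 :=
      htail.eventually_lt_const (by linarith)
    obtain ⟨M, hMev, hMn⟩ := (hev.and (eventually_ge_atTop n)).exists
    have hM1 : 1 ≤ M := hn.trans hMn
    have hM1' : (1 : ℝ) ≤ (M : ℝ) := by exact_mod_cast hM1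
    have hsumM : Summable (fun k : ℕ => ψ (((k + M : ℕ)) : ℝ)) := by
      have h := (summable_nat_add_iff (f := fun k : ℕ => ψ k) M).mpr hsum
      exact h
    have hnnM : ∀ k : ℕ, 0 ≤ ψ (((k + M : ℕ)) : ℝ) := by
      intro k
      apply hψnn
      have : (M : ℝ) ≤ ((k + M : ℕ) : ℝ) := by push_cast; linarith [Nat.cast_nonneg (α := ℝ) k]
      linarith
    -- M * ψ(2M) ≤ tail at M
    have h2M1 : (1 : ℝ) ≤ ((2 * M : ℕ) : ℝ) := by push_cast; linarith
    have hbd : (M : ℝ) * ψ (((2 * M : ℕ)) : ℝ) ≤ ∑' k : ℕ, ψ (((k + M : ℕ)) : ℝ) := by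
      have hterm : ∀ j ∈ Finset.range M, ψ (((2 * M : ℕ)) : ℝ) ≤ ψ (((j + M : ℕ)) : ℝ) := by
        intro j hj
        have hjM : (1 : ℝ) ≤ ((j + M : ℕ) : ℝ) := by
          push_cast; linarith [Nat.cast_nonneg (α := ℝ) j]
        apply hψdec hjM h2M1
        have : j + M ≤ 2 * M := by
          have := Finset.mem_range.mp hj
          omega
        exact_mod_cast this
      calc (M : ℝ) * ψ (((2 * M : ℕ)) : ℝ)
          = ∑ _j ∈ Finset.range M, ψ (((2 * M : ℕ)) : ℝ) := by
            rw [Finset.sum_const, Finset.card_range, nsmul_eq_mul]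
        _ ≤ ∑ j ∈ Finset.range M, ψ (((j + M : ℕ)) : ℝ) := Finset.sum_le_sum hterm
        _ ≤ ∑' k : ℕ, ψ (((k + M : ℕ)) : ℝ) := Summable.sum_le_tsum _ (fun j _ => hnnM j) hsumM
    -- g(2M) < ε
    have hg2M : g ((2 * M : ℕ) : ℝ) < ε := by
      rw [hg]
      have : ψ (((2 * M : ℕ)) : ℝ) * ((2 * M : ℕ) : ℝ)
          = 2 * ((M : ℝ) * ψ (((2 * M : ℕ)) : ℝ)) := by push_cast; ring
      rw [this]
      linarith
    have h2Mn : n ≤ 2 * M := by omega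
    have htel := tel (2 * M) h2Mn
    have hps : ∑ k ∈ Finset.Ico n (2 * M), ψ (k : ℝ) / α
        = (∑ k ∈ Finset.Ico n (2 * M), ψ (k : ℝ)) / α := by
      rw [Finset.sum_div]
    have hps2 : (∑ k ∈ Finset.Ico n (2 * M), ψ (k : ℝ)) / α ≤ S / α :=
      (div_le_div_iff_of_pos_right hα).mpr (hpart (2 * M))
    have hgn : g (n : ℝ) = ψ n * (n : ℝ) := hg _
    have hSdiv : S / α = 1 / α * S := by ring
    rw [hps] at htel
    rw [hgn] at htel
    nlinarith [htel, hps2, hg2M]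
  have hfinal := le_of_forall_pos_le_add main
  exact hfinal
end

section
/- Let ψ : [1,∞) → (0,∞) be positive, continuous, convex and decreasing with Σ_{k=1}^∞ ψ(k)^s k^{s-2} < ∞ for some 1 < s < ∞, 1/s+1/s' = 1. Suppose g(t) = ψ(t) t^{1/s'} is decreasing and there is α > 0 with g(t)/(t|g'(t+0)|) ≥ α for all t ≥ n. Let Φ(x) = ∫_x^∞ ψ(t)^s t^{s-2} dt, let l ∈ ℕ, and let A = ⌊Φ^{-1}(Φ(n)/(2l))⌋ + 2n. Then Σ_{k=2n}^{A} ψ(k)^s k^{s-2} > (1 − 1/(2l) − s/α) · Σ_{k=n}^∞ ψ(k)^s k^{s-2}. -/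
open Set Filter MeasureTheory

open Topology

set_option maxHeartbeats 2000000 in
/-- Key inequality (18): with `Φ(x) = ∫_x^∞ ψ(t)^s t^(s-2) dt` and
`A = ⌊Φ⁻¹(Φ(n)/(2l))⌋ + 2n`, one has
`∑_{k=2n}^A ψ(k)^s k^(s-2) > (1 - 1/(2l) - s/α) ∑_{k=n}^∞ ψ(k)^s k^(s-2)`. -/
theorem stmt_7 (ψ : ℝ → ℝ) (s s' : ℝ) (hs : 1 < s) (hss' : 1 / s + 1 / s' = 1)
    (hψpos : ∀ t ∈ Ici (1 : ℝ), 0 < ψ t)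
    (hψcont : ContinuousOn ψ (Ici (1 : ℝ)))
    (hψconv : ConvexOn ℝ (Ici (1 : ℝ)) ψ)
    (hψdec : AntitoneOn ψ (Ici (1 : ℝ)))
    (hsum : Summable (fun k : ℕ => ψ k ^ s * (k : ℝ) ^ (s - 2)))
    (g : ℝ → ℝ) (hg : ∀ t, g t = ψ t * t ^ (1 / s'))
    (hgdec : AntitoneOn g (Ici (1 : ℝ)))
    (n : ℕ) (hn : 1 ≤ n) (α : ℝ) (hα : 0 < α)
    (hαg : ∀ t : ℝ, (n : ℝ) ≤ t →
      α ≤ g t / (t * |derivWithin g (Ici t) t|))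
    (Φ : ℝ → ℝ) (hΦ : ∀ x, Φ x = ∫ t in Ioi x, ψ t ^ s * t ^ (s - 2))
    (l : ℕ) (hl : 1 ≤ l)
    (B : ℝ) (hB1 : 1 ≤ B) (hB : Φ B = Φ n / (2 * l))
    (A : ℕ) (hA : A = ⌊B⌋₊ + 2 * n) :
    ∑ k ∈ Finset.Icc (2 * n) A, ψ k ^ s * (k : ℝ) ^ (s - 2) >
      (1 - 1 / (2 * l) - s / α) *
        ∑' k : ℕ, ψ (n + k) ^ s * ((n + k : ℕ) : ℝ) ^ (s - 2) := by
  have hs0 : (0:ℝ) < s := lt_trans one_pos hs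
  have hs'inv : 1 / s' = 1 - 1 / s := by linarith
  have hexp : 1 / s' * s = s - 1 := by
    rw [hs'inv]; field_simp
  set h : ℝ → ℝ := fun t => g t ^ s / t with hh
  set a : ℕ → ℝ := fun k => ψ k ^ s * (k : ℝ) ^ (s - 2) with ha
  have hgpos : ∀ t ∈ Ici (1:ℝ), 0 < g t := by
    intro t ht
    rw [hg]
    exact mul_pos (hψpos t ht) (Real.rpow_pos_of_pos (lt_of_lt_of_le one_pos ht) _)
  have hpsih : ∀ t ∈ Ici (1:ℝ), ψ t ^ s * t ^ (s - 2) = h t := by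
    intro t ht
    have ht0 : (0:ℝ) < t := lt_of_lt_of_le one_pos ht
    have h1 : g t ^ s = ψ t ^ s * t ^ (s - 1) := by
      rw [hg, Real.mul_rpow (hψpos t ht).le (Real.rpow_nonneg ht0.le _),
        ← Real.rpow_mul ht0.le, hexp]
    have h2 : t ^ (s - 1) / t = t ^ (s - 2) := by
      rw [show s - 2 = s - 1 - 1 by ring, Real.rpow_sub ht0 (s - 1) 1, Real.rpow_one]
    show ψ t ^ s * t ^ (s - 2) = g t ^ s / t
    rw [h1, ← h2, mul_div_assoc]
  have hhpos : ∀ t ∈ Ici (1:ℝ), 0 < h t :=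
    fun t ht => div_pos (Real.rpow_pos_of_pos (hgpos t ht) _) (lt_of_lt_of_le one_pos ht)
  have hhanti : AntitoneOn h (Ici (1:ℝ)) := by
    intro x hx y hy hxy
    have hx0 : (0:ℝ) < x := lt_of_lt_of_le one_pos hx
    exact div_le_div₀ (Real.rpow_nonneg (hgpos x hx).le _)
      (Real.rpow_le_rpow (hgpos y hy).le (hgdec hx hy hxy) hs0.le) hx0 hxy
  have hgcont : ContinuousOn g (Ici (1:ℝ)) := by
    have : ContinuousOn (fun t : ℝ => ψ t * t ^ (1 / s')) (Ici (1:ℝ)) := by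
      refine hψcont.mul (fun t ht => ?_)
      exact (Real.continuousAt_rpow_const t _
        (Or.inl (ne_of_gt (lt_of_lt_of_le one_pos ht)))).continuousWithinAt
    exact this.congr (fun t _ => hg t)
  have hhcont : ContinuousOn h (Ici (1:ℝ)) := by
    refine ContinuousOn.div ?_ continuousOn_id
      (fun t ht => ne_of_gt (lt_of_lt_of_le one_pos ht))
    exact hgcont.rpow_const (fun t ht => Or.inl (ne_of_gt (hgpos t ht)))
  have hint : ∀ x y : ℝ, 1 ≤ x → x ≤ y → IntervalIntegrable h volume x y := by
    intro x y h1x hxy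
    apply (hhcont.mono ?_).intervalIntegrable
    rw [uIcc_of_le hxy]
    exact fun t ht => le_trans h1x ht.1
  have hak : ∀ k : ℕ, 1 ≤ k → a k = h k := by
    intro k hk
    exact hpsih k (mem_Ici.2 (by exact_mod_cast hk))
  have hapos : ∀ k : ℕ, 1 ≤ k → 0 < a k := by
    intro k hk; rw [hak k hk]; exact hhpos k (mem_Ici.2 (by exact_mod_cast hk))
  have hsuma : Summable a := hsum
  have hsum_shift : ∀ m : ℕ, Summable (fun k : ℕ => a (m + k)) := by
    intro m
    exact ((summable_nat_add_iff m).2 hsuma).congr (fun k => by rw [add_comm])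
  set T : ℝ := ∑' k : ℕ, a (n + k) with hT
  have hTnonneg : 0 ≤ T :=
    tsum_nonneg (fun k => (hapos (n + k) (le_trans hn (Nat.le_add_right n k))).le)
  have htail_le : ∀ m : ℕ, n ≤ m → (∑' k : ℕ, a (m + k)) ≤ T := by
    intro m hm
    have heq := Summable.sum_add_tsum_nat_add (f := fun k => a (n + k)) (m - n) (hsum_shift n)
    have h2 : (∑' i : ℕ, a (n + (i + (m - n)))) = ∑' k : ℕ, a (m + k) := by
      refine tsum_congr (fun i => ?_)
      congr 1; omega
    have h3 : 0 ≤ ∑ i ∈ Finset.range (m - n), a (n + i) :=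
      Finset.sum_nonneg (fun i _ => (hapos _ (by omega)).le)
    rw [h2] at heq
    rw [hT, ← heq]
    linarith
  have hpartial : ∀ (m i : ℕ), n ≤ m → ∑ j ∈ Finset.range i, a (m + j) ≤ T := by
    intro m i hm
    refine le_trans (Summable.sum_le_tsum _ (fun j _ => (hapos _ (by omega)).le) (hsum_shift m))
      (htail_le m hm)
  -- Φ in terms of h
  have hΦh : ∀ x : ℝ, 1 ≤ x → Φ x = ∫ t in Ioi x, h t := by
    intro x hx
    rw [hΦ]
    exact setIntegral_congr_fun measurableSet_Ioi
      (fun t ht => hpsih t (mem_Ici.2 (le_trans hx (le_of_lt ht))))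
  have hInt1 : IntegrableOn h (Ioi (1:ℝ)) := by
    refine integrableOn_Ioi_of_intervalIntegral_norm_bounded (f := h)
      (∑' j : ℕ, a (1 + j)) 1 (b := fun i : ℕ => 1 + (i:ℝ)) (l := atTop)
      (fun i => (hint 1 (1 + (i:ℝ)) le_rfl (by have hi0 : (0:ℝ) ≤ (i:ℝ) := Nat.cast_nonneg i; linarith)).1)
      (tendsto_atTop_add_const_left _ _ tendsto_natCast_atTop_atTop)
      (Filter.Eventually.of_forall (fun i => ?_))
    have hnorm : (∫ x in (1:ℝ)..(1 + (i:ℝ)), ‖h x‖) = ∫ x in (1:ℝ)..(1 + (i:ℝ)), h x := by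
      refine intervalIntegral.integral_congr (fun x hx => ?_)
      rw [uIcc_of_le (by have hi0 : (0:ℝ) ≤ (i:ℝ) := Nat.cast_nonneg i; linarith)] at hx
      exact Real.norm_of_nonneg (hhpos x (mem_Ici.2 hx.1)).le
    rw [hnorm]
    calc (∫ x in (1:ℝ)..(1 + (i:ℝ)), h x) ≤ ∑ j ∈ Finset.range i, h (1 + (j:ℝ)) :=
          AntitoneOn.integral_le_sum (hhanti.mono (fun t ht => ht.1))
      _ = ∑ j ∈ Finset.range i, a (1 + j) := by
          refine Finset.sum_congr rfl (fun j _ => ?_)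
          rw [hak (1 + j) (by omega)]; push_cast; ring_nf
      _ ≤ ∑' j : ℕ, a (1 + j) :=
          Summable.sum_le_tsum _ (fun j _ => (hapos _ (by omega)).le) (hsum_shift 1)
  have hIntx : ∀ x : ℝ, 1 ≤ x → IntegrableOn h (Ioi x) :=
    fun x hx => hInt1.mono_set (Ioi_subset_Ioi hx)
  have hn1 : (1:ℝ) ≤ (n:ℝ) := by exact_mod_cast hn
  have hΦtend : ∀ x : ℝ, 1 ≤ x →
      Tendsto (fun i : ℕ => ∫ t in x..(x + (i:ℝ)), h t) atTop (𝓝 (Φ x)) := by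
    intro x hx
    rw [hΦh x hx]
    exact intervalIntegral_tendsto_integral_Ioi x (hIntx x hx)
      (tendsto_atTop_add_const_left _ _ tendsto_natCast_atTop_atTop)
  have hΦn_le_T : Φ (n:ℝ) ≤ T := by
    refine le_of_tendsto (hΦtend n hn1) (Filter.Eventually.of_forall (fun i => ?_))
    calc (∫ t in (n:ℝ)..((n:ℝ) + (i:ℝ)), h t) ≤ ∑ j ∈ Finset.range i, h ((n:ℝ) + (j:ℝ)) :=
          AntitoneOn.integral_le_sum (hhanti.mono (fun t ht => le_trans hn1 ht.1))
      _ = ∑ j ∈ Finset.range i, a (n + j) := by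
          refine Finset.sum_congr rfl (fun j _ => ?_)
          rw [hak (n + j) (by omega)]; push_cast; ring_nf
      _ ≤ T := hpartial n i le_rfl
  have hA2n : 2 * n ≤ A := by omega
  have hA1 : (1:ℝ) ≤ (A:ℝ) := by exact_mod_cast (by omega : 1 ≤ A)
  have htail_Φ : (∑' k : ℕ, a ((A + 1) + k)) ≤ Φ (A:ℝ) := by
    refine Real.tsum_le_of_sum_range_le (fun k => (hapos _ (by omega)).le) (fun i => ?_)
    calc (∑ j ∈ Finset.range i, a ((A + 1) + j))
        = ∑ j ∈ Finset.range i, h ((A:ℝ) + ((j + 1 : ℕ):ℝ)) := by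
          refine Finset.sum_congr rfl (fun j _ => ?_)
          rw [hak ((A + 1) + j) (by omega)]; push_cast; ring_nf
      _ ≤ ∫ x in (A:ℝ)..((A:ℝ) + (i:ℝ)), h x :=
          AntitoneOn.sum_le_integral (hhanti.mono (fun t ht => le_trans hA1 ht.1))
      _ ≤ Φ (A:ℝ) := by
          rw [hΦh (A:ℝ) hA1, intervalIntegral.integral_of_le (by have hi0 : (0:ℝ) ≤ (i:ℝ) := Nat.cast_nonneg i; linarith)]
          refine setIntegral_mono_set (hIntx (A:ℝ) hA1) ?_ (Ioc_subset_Ioi_self.eventuallyLE)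
          exact (ae_restrict_iff' measurableSet_Ioi).2
            (Filter.Eventually.of_forall (fun t ht => (hhpos t (mem_Ici.2 (le_trans hA1 ht.le))).le))
  have hBA : B + 1 ≤ (A:ℝ) := by
    have hfl : B < (⌊B⌋₊:ℝ) + 1 := Nat.lt_floor_add_one B
    have hcast : (A:ℝ) = (⌊B⌋₊:ℝ) + 2 * (n:ℝ) := by rw [hA]; push_cast; ring
    linarith
  have hsplit : Φ B = (∫ t in Ioc B (A:ℝ), h t) + Φ (A:ℝ) := by
    rw [hΦh B hB1, hΦh (A:ℝ) hA1, ← setIntegral_union (Set.Ioc_disjoint_Ioi le_rfl)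
      measurableSet_Ioi ((hint B (A:ℝ) hB1 (by linarith)).1) (hIntx (A:ℝ) hA1),
      Ioc_union_Ioi_eq_Ioi (by linarith)]
  have hIocpos : 0 < ∫ t in Ioc B (A:ℝ), h t := by
    have hge := setIntegral_ge_of_const_le (c := h (A:ℝ)) measurableSet_Ioc
      measure_Ioc_lt_top.ne
      (fun x hx => hhanti (mem_Ici.2 (le_trans hB1 hx.1.le)) (mem_Ici.2 hA1) hx.2)
      ((hint B (A:ℝ) hB1 (by linarith)).1)
    have hvol : volume.real (Ioc B (A:ℝ)) = (A:ℝ) - B := by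
      rw [measureReal_def, Real.volume_Ioc, ENNReal.toReal_ofReal (by linarith)]
    rw [hvol, smul_eq_mul] at hge
    have hhA : 0 < h (A:ℝ) := hhpos (A:ℝ) (mem_Ici.2 hA1)
    nlinarith
  have hΦA_lt : Φ (A:ℝ) < Φ B := by linarith
  have hl2 : (0:ℝ) < 2 * (l:ℝ) := by
    have : (1:ℝ) ≤ (l:ℝ) := by exact_mod_cast hl
    linarith
  have hTail_lt : (∑' k : ℕ, a ((A + 1) + k)) < (1 / (2 * (l:ℝ))) * T := by
    have h1 : Φ (A:ℝ) < Φ (n:ℝ) / (2 * (l:ℝ)) := by rw [← hB]; exact hΦA_lt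
    have h2 : Φ (n:ℝ) / (2 * (l:ℝ)) ≤ T / (2 * (l:ℝ)) := by gcongr
    calc (∑' k : ℕ, a ((A + 1) + k)) ≤ Φ (A:ℝ) := htail_Φ
      _ < Φ (n:ℝ) / (2 * (l:ℝ)) := h1
      _ ≤ T / (2 * (l:ℝ)) := h2
      _ = (1 / (2 * (l:ℝ))) * T := by ring
  -- right-derivative facts for g
  have hgderiv : ∀ x : ℝ, (n:ℝ) ≤ x →
      HasDerivWithinAt g (derivWithin g (Ici x) x) (Ici x) x ∧
      |derivWithin g (Ici x) x| ≤ g x / (α * x) := by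
    intro x hx
    have hx1 : (1:ℝ) ≤ x := le_trans hn1 hx
    have hx0 : (0:ℝ) < x := lt_of_lt_of_le one_pos hx1
    have hgx : 0 < g x := hgpos x (mem_Ici.2 hx1)
    have hdiff : DifferentiableWithinAt ℝ g (Ici x) x := by
      by_contra hnd
      have h0 := derivWithin_zero_of_not_differentiableWithinAt hnd
      have h1 := hαg x hx
      rw [h0, abs_zero, mul_zero, div_zero] at h1
      linarith
    refine ⟨hdiff.hasDerivWithinAt, ?_⟩
    set d := derivWithin g (Ici x) x with hd
    rcases eq_or_lt_of_le (abs_nonneg d) with hd0 | hd0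
    · rw [← hd0]; positivity
    · have hxd : 0 < x * |d| := mul_pos hx0 hd0
      have h1 := hαg x hx
      rw [le_div_iff₀ hxd] at h1
      rw [le_div_iff₀ (mul_pos hα hx0)]
      nlinarith
  -- g tends to zero
  have hglim : Tendsto (fun i : ℕ => g ((n:ℝ) + (i:ℝ))) atTop (𝓝 0) := by
    have hmem : ∀ i : ℕ, ((n:ℝ) + (i:ℝ)) ∈ Ici (1:ℝ) := by
      intro i
      have hi0 : (0:ℝ) ≤ (i:ℝ) := Nat.cast_nonneg i
      exact mem_Ici.2 (by linarith)
    have hanti : Antitone (fun i : ℕ => g ((n:ℝ) + (i:ℝ))) := by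
      intro i j hij
      exact hgdec (hmem i) (hmem j) (by
        have : (i:ℝ) ≤ (j:ℝ) := by exact_mod_cast hij
        linarith)
    have hbdd : BddBelow (range fun i : ℕ => g ((n:ℝ) + (i:ℝ))) := by
      refine ⟨0, fun y hy => ?_⟩
      obtain ⟨i, rfl⟩ := hy
      exact (hgpos _ (hmem i)).le
    have hlim := tendsto_atTop_ciInf hanti hbdd
    set L := ⨅ i : ℕ, g ((n:ℝ) + (i:ℝ)) with hL
    have hL0 : 0 ≤ L := le_ciInf (fun i => (hgpos _ (hmem i)).le)
    rcases eq_or_lt_of_le hL0 with hLeq | hLpos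
    · rwa [← hLeq] at hlim
    · exfalso
      have hLle : ∀ i : ℕ, L ≤ g ((n:ℝ) + (i:ℝ)) := fun i => ciInf_le hbdd i
      have hLs : (0:ℝ) < L ^ s := Real.rpow_pos_of_pos hLpos s
      have hsum2 : Summable (fun i : ℕ => L ^ s * ((n:ℝ) + (i:ℝ))⁻¹) := by
        refine Summable.of_nonneg_of_le (fun i => by positivity) (fun i => ?_) (hsum_shift n)
        have hcast : ((n + i : ℕ):ℝ) = (n:ℝ) + (i:ℝ) := by push_cast; ring
        have hni : (0:ℝ) < (n:ℝ) + (i:ℝ) := lt_of_lt_of_le one_pos (hmem i)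
        rw [hak (n + i) (by omega)]
        show L ^ s * ((n:ℝ) + (i:ℝ))⁻¹ ≤ h ((n + i : ℕ):ℝ)
        rw [hcast]
        show L ^ s * ((n:ℝ) + (i:ℝ))⁻¹ ≤ g ((n:ℝ) + (i:ℝ)) ^ s / ((n:ℝ) + (i:ℝ))
        rw [mul_inv_le_iff₀ hni, div_mul_cancel₀ _ (ne_of_gt hni)]
        exact Real.rpow_le_rpow hL0 (hLle i) hs0.le
      have hns : Summable (fun i : ℕ => ((n:ℝ) + (i:ℝ))⁻¹) := by
        have h5 := hsum2.mul_left (L ^ s)⁻¹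
        refine h5.congr (fun i => ?_)
        field_simp
      have h4 : Summable (fun i : ℕ => ((i + n : ℕ):ℝ)⁻¹) := by
        refine hns.congr (fun i => ?_)
        push_cast; ring_nf
      exact Real.not_summable_natCast_inv ((summable_nat_add_iff n).1 h4)
  have hgs_lim : Tendsto (fun i : ℕ => g ((n:ℝ) + (i:ℝ)) ^ s) atTop (𝓝 0) := by
    have hc : ContinuousAt (fun x : ℝ => x ^ s) 0 :=
      Real.continuousAt_rpow_const 0 s (Or.inr hs0.le)
    have h6 := hc.tendsto.comp hglim
    rw [Real.zero_rpow (ne_of_gt hs0)] at h6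
    exact h6
  have hn0 : (0:ℝ) < (n:ℝ) := lt_of_lt_of_le one_pos hn1
  -- key inequality g(n)^s ≤ (s/α) Φ(n), via a fencing argument
  have hkey : (α / s) * g (n:ℝ) ^ s ≤ Φ (n:ℝ) := by
    have hmain : ∀ i : ℕ, (α/s) * g (n:ℝ) ^ s ≤
        (α/s) * g ((n:ℝ) + (i:ℝ)) ^ s + ∫ t in (n:ℝ)..((n:ℝ) + (i:ℝ)), h t := by
      intro i
      have hi0 : (0:ℝ) ≤ (i:ℝ) := Nat.cast_nonneg i
      set M : ℝ := (n:ℝ) + (i:ℝ) with hM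
      have hnM : (n:ℝ) ≤ M := by rw [hM]; linarith
      have hIcc1 : Icc (n:ℝ) M ⊆ Ici (1:ℝ) := fun t ht => le_trans hn1 ht.1
      set F : ℝ → ℝ := fun x => (α/s) * g x ^ s + ∫ t in (n:ℝ)..x, h t with hF
      set F' : ℝ → ℝ :=
        fun x => (α/s) * (derivWithin g (Ici x) x * s * g x ^ (s-1)) + h x with hF'
      have hFc : ContinuousOn F (Icc (n:ℝ) M) := by
        refine ContinuousOn.add (ContinuousOn.mul continuousOn_const ?_) ?_
        · exact (hgcont.mono hIcc1).rpow_const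
            (fun t ht => Or.inl (ne_of_gt (hgpos t (hIcc1 ht))))
        · have := intervalIntegral.continuousOn_primitive_interval (μ := volume)
            (a := (n:ℝ)) (b := M) (f := h) ?_
          · exact this.mono (by rw [uIcc_of_le hnM])
          · rw [uIcc_of_le hnM]
            exact ((hhcont.mono hIcc1).integrableOn_compact isCompact_Icc)
      have hFd : ∀ x ∈ Ico (n:ℝ) M, HasDerivWithinAt F (F' x) (Ici x) x := by
        intro x hx
        have hx1 : (1:ℝ) ≤ x := le_trans hn1 hx.1
        have hIcix : Ici x ⊆ Ici (1:ℝ) := fun t ht => le_trans hx1 ht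
        have h1 : HasDerivWithinAt (fun y => (α/s) * g y ^ s)
            ((α/s) * (derivWithin g (Ici x) x * s * g x ^ (s-1))) (Ici x) x :=
          (((hgderiv x hx.1).1).rpow_const
            (Or.inl (ne_of_gt (hgpos x (mem_Ici.2 hx1))))).const_mul (α/s)
        have h2 : HasDerivWithinAt (fun u => ∫ t in (n:ℝ)..u, h t) (h x) (Ici x) x := by
          refine intervalIntegral.integral_hasDerivWithinAt_right
            (hint (n:ℝ) x hn1 hx.1) (s := Ici x) (t := Ioi x)
            ⟨Ioi x, self_mem_nhdsWithin,
              ((hhcont.mono (fun t ht => hIcix (le_of_lt ht))).aestronglyMeasurable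
                measurableSet_Ioi)⟩
            (((hhcont.mono hIcix).continuousWithinAt (mem_Ici.2 le_rfl)).mono
              Ioi_subset_Ici_self)
        exact h1.add h2
      have hF'0 : ∀ x ∈ Ico (n:ℝ) M, 0 ≤ F' x := by
        intro x hx
        have hx1 : (1:ℝ) ≤ x := le_trans hn1 hx.1
        have hx0 : (0:ℝ) < x := lt_of_lt_of_le one_pos hx1
        have hgx : 0 < g x := hgpos x (mem_Ici.2 hx1)
        set d := derivWithin g (Ici x) x with hdd
        have hdb : |d| ≤ g x / (α * x) := (hgderiv x hx.1).2
        have hnd : -d ≤ g x / (α * x) := le_trans (neg_le_abs d) hdb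
        set G : ℝ := g x ^ (s - 1) with hG
        have hG0 : 0 ≤ G := Real.rpow_nonneg hgx.le _
        have hgs : g x ^ s = G * g x := by
          have := Real.rpow_add_one (ne_of_gt hgx) (s - 1)
          rw [sub_add_cancel] at this
          rw [hG, ← this]
        have hsimp : F' x = α * d * G + G * g x / x := by
          rw [hF']
          show (α/s) * (d * s * g x ^ (s-1)) + g x ^ s / x = α * d * G + G * g x / x
          rw [hgs, ← hG]
          field_simp
        rw [hsimp]
        have hmul := mul_le_mul_of_nonneg_left hnd (by positivity : (0:ℝ) ≤ α * G)
        have heq9 : α * G * (g x / (α * x)) = G * g x / x := by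
          field_simp
        rw [heq9] at hmul
        nlinarith
      -- fencing
      have hfence := image_le_of_deriv_right_le_deriv_boundary
        (f := fun x => -F x) (f' := fun x => -F' x) (a := (n:ℝ)) (b := M)
        hFc.neg (fun x hx => (hFd x hx).neg)
        (le_refl (-F (n:ℝ))) (B := fun _ => -F (n:ℝ)) (B' := fun _ => 0)
        continuousOn_const (fun x _ => hasDerivWithinAt_const x _ _)
        (fun x hx => neg_nonpos.2 (hF'0 x hx))
      have hFM := hfence (right_mem_Icc.2 hnM)
      have hFn : F (n:ℝ) = (α/s) * g (n:ℝ) ^ s := by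
        rw [hF]; simp [intervalIntegral.integral_same]
      have : F (n:ℝ) ≤ F M := by linarith
      rw [hFn, hF] at this
      exact this
    have hlim2 : Tendsto (fun i : ℕ =>
        (α/s) * g ((n:ℝ) + (i:ℝ)) ^ s + ∫ t in (n:ℝ)..((n:ℝ) + (i:ℝ)), h t) atTop
        (𝓝 ((α/s) * 0 + Φ (n:ℝ))) :=
      Tendsto.add (hgs_lim.const_mul (α/s)) (hΦtend (n:ℝ) hn1)
    have := ge_of_tendsto hlim2 (Filter.Eventually.of_forall hmain)
    linarith
  -- bound on the head sum
  have hgns : (n:ℝ) * a n = g (n:ℝ) ^ s := by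
    rw [hak n hn]
    show (n:ℝ) * (g (n:ℝ) ^ s / (n:ℝ)) = g (n:ℝ) ^ s
    field_simp
  have hS1 : ∑ k ∈ Finset.Ico n (2*n), a k ≤ (s/α) * T := by
    have h1 : ∑ k ∈ Finset.Ico n (2*n), a k ≤ (n:ℝ) * a n := by
      have h2 := Finset.sum_le_card_nsmul (Finset.Ico n (2*n)) a (a n) (fun k hk => by
        rw [Finset.mem_Ico] at hk
        rw [hak k (by omega), hak n hn]
        exact hhanti (mem_Ici.2 hn1)
          (mem_Ici.2 (le_trans hn1 (by exact_mod_cast hk.1)))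
          (by exact_mod_cast hk.1))
      rw [Nat.card_Ico] at h2
      have h3 : ((2*n - n : ℕ) : ℝ) = (n:ℝ) := by
        have : 2*n - n = n := by omega
        rw [this]
      calc ∑ k ∈ Finset.Ico n (2*n), a k ≤ (2*n - n : ℕ) • a n := h2
        _ = ((2*n - n : ℕ) : ℝ) * a n := by rw [nsmul_eq_mul]
        _ = (n:ℝ) * a n := by rw [h3]
    have h4 : g (n:ℝ) ^ s ≤ (s/α) * Φ (n:ℝ) := by
      have h5 : g (n:ℝ) ^ s = (s/α) * ((α/s) * g (n:ℝ) ^ s) := by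
        field_simp
      rw [h5]
      exact mul_le_mul_of_nonneg_left hkey (by positivity)
    have h6 : (s/α) * Φ (n:ℝ) ≤ (s/α) * T :=
      mul_le_mul_of_nonneg_left hΦn_le_T (by positivity)
    linarith
  -- splitting the tail sum
  set N : ℕ := A + 1 - n with hN
  have hnN : n + N = A + 1 := by omega
  have hsplitT : T = (∑ i ∈ Finset.range N, a (n + i)) + ∑' k : ℕ, a ((A+1) + k) := by
    have h7 := Summable.sum_add_tsum_nat_add (f := fun k => a (n + k)) N (hsum_shift n)
    rw [hT, ← h7]
    congr 1
    refine tsum_congr (fun i => ?_)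
    show a (n + (i + N)) = a ((A+1) + i)
    congr 1
    omega
  have hIco : (∑ i ∈ Finset.range N, a (n + i)) = ∑ k ∈ Finset.Ico n (A+1), a k := by
    rw [Finset.sum_Ico_eq_sum_range, ← hN]
  have hIcoSplit : ∑ k ∈ Finset.Ico n (A+1), a k
      = (∑ k ∈ Finset.Ico n (2*n), a k) + ∑ k ∈ Finset.Ico (2*n) (A+1), a k :=
    (Finset.sum_Ico_consecutive _ (by omega) (by omega)).symm
  have hIcc : Finset.Ico (2*n) (A+1) = Finset.Icc (2*n) A := by
    rw [Finset.Ico_add_one_right_eq_Icc]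
  have hgoalT : (∑' k : ℕ, ψ ((n:ℝ) + (k:ℝ)) ^ s * ((n + k : ℕ):ℝ) ^ (s-2)) = T := by
    refine tsum_congr (fun k => ?_)
    show ψ ((n:ℝ) + (k:ℝ)) ^ s * ((n + k : ℕ):ℝ) ^ (s-2) = a (n + k)
    rw [ha]
    push_cast
    ring_nf
  rw [gt_iff_lt, hgoalT]
  have hLHS : ∑ k ∈ Finset.Icc (2*n) A, a k
      = T - (∑ k ∈ Finset.Ico n (2*n), a k) - ∑' k : ℕ, a ((A+1) + k) := by
    rw [hsplitT, hIco, hIcoSplit, hIcc]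
    ring
  have hcoeff : (1 - 1/(2*(l:ℝ)) - s/α) * T
      = T - (1/(2*(l:ℝ))) * T - (s/α) * T := by ring
  rw [hcoeff]
  have hfin := hTail_lt
  linarith [hLHS, hS1, hfin]
end

section
/- For every m ∈ ℕ, the L¹ norm over one period of the Vallée-Poussin kernel V_m(t) = 1/2 + Σ_{k=1}^{m} cos(kt) + 2·Σ_{k=m+1}^{2m−1} (1 − k/(2m)) cos(kt) satisfies ∫_{−π}^{π} |V_m(t)| dt ≤ 3π. -/
open Real

private noncomputable def Wk (n : ℕ) (t : ℝ) : ℝ :=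
  (n : ℝ) + 2 * ∑ k ∈ Finset.Icc 1 n, ((n : ℝ) - k) * Real.cos (k * t)

private lemma refl_sum (n : ℕ) (t : ℝ) :
    ∑ l ∈ Finset.range n, Real.cos (((n : ℝ) - l) * t)
      = ∑ k ∈ Finset.Icc 1 n, Real.cos ((k : ℝ) * t) := by
  apply Finset.sum_nbij' (fun i => n - i) (fun k => n - k)
  · intro i hi; simp only [Finset.mem_range] at hi; simp [Finset.mem_Icc]; omega
  · intro k hk; simp only [Finset.mem_Icc] at hk; simp [Finset.mem_range]; omega
  · intro i hi; simp only [Finset.mem_range] at hi; omega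
  · intro k hk; simp only [Finset.mem_Icc] at hk; omega
  · intro i hi; simp only [Finset.mem_range] at hi
    congr 2
    rw [Nat.cast_sub (by omega)]

private lemma key (n : ℕ) (t : ℝ) :
    ∑ j ∈ Finset.range n, ∑ l ∈ Finset.range n, Real.cos (((j : ℝ) - l) * t)
      = Wk n t := by
  induction n with
  | zero => simp [Wk]
  | succ n ih =>
    have h1 := refl_sum n t
    have h2 : ∑ j ∈ Finset.range n, Real.cos (((j : ℝ) - n) * t)
        = ∑ k ∈ Finset.Icc 1 n, Real.cos ((k : ℝ) * t) := by
      rw [← h1]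
      apply Finset.sum_congr rfl
      intro j _
      rw [show ((j : ℝ) - n) * t = -(((n : ℝ) - j) * t) by ring, Real.cos_neg]
    have hsplit : ∑ j ∈ Finset.range (n+1), ∑ l ∈ Finset.range (n+1),
          Real.cos (((j : ℝ) - l) * t)
        = (∑ j ∈ Finset.range n, ∑ l ∈ Finset.range n, Real.cos (((j : ℝ) - l) * t))
          + (∑ j ∈ Finset.range n, Real.cos (((j : ℝ) - n) * t))
          + ((∑ l ∈ Finset.range n, Real.cos (((n : ℝ) - l) * t))
            + Real.cos (((n : ℝ) - n) * t)) := by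
      rw [Finset.sum_range_succ]
      congr 1
      · rw [← Finset.sum_add_distrib]
        apply Finset.sum_congr rfl
        intro j _
        rw [Finset.sum_range_succ]
      · rw [Finset.sum_range_succ]
    have hR : Wk (n+1) t = Wk n t
        + 2 * (∑ k ∈ Finset.Icc 1 n, Real.cos ((k : ℝ) * t)) + 1 := by
      unfold Wk
      rw [Finset.sum_Icc_succ_top (by omega)]
      have h3 : ∑ k ∈ Finset.Icc 1 n, (((n : ℝ) + 1) - k) * Real.cos (k * t)
          = ∑ k ∈ Finset.Icc 1 n, (((n : ℝ) - k) * Real.cos (k * t) + Real.cos (k * t)) := by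
        apply Finset.sum_congr rfl; intro k _; ring
      push_cast
      rw [h3, Finset.sum_add_distrib]
      ring
    rw [hsplit, ih, h2, h1, hR, sub_self, zero_mul, Real.cos_zero]
    ring

private lemma Wk_nonneg (n : ℕ) (t : ℝ) : 0 ≤ Wk n t := by
  have h : (∑ j ∈ Finset.range n, Real.cos ((j : ℝ) * t)) ^ 2
      + (∑ j ∈ Finset.range n, Real.sin ((j : ℝ) * t)) ^ 2 = Wk n t := by
    rw [← key, sq, sq, Finset.sum_mul_sum, Finset.sum_mul_sum, ← Finset.sum_add_distrib]
    apply Finset.sum_congr rfl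
    intro j _
    rw [← Finset.sum_add_distrib]
    apply Finset.sum_congr rfl
    intro l _
    rw [sub_mul, Real.cos_sub]
  rw [← h]; positivity

private lemma int_cos (k : ℕ) (hk : 1 ≤ k) :
    ∫ t in (-π)..π, Real.cos ((k : ℝ) * t) = 0 := by
  have hk0 : (k : ℝ) ≠ 0 := by positivity
  have h := intervalIntegral.integral_comp_mul_left (f := Real.cos) (c := (k : ℝ))
    (a := -π) (b := π) hk0
  rw [h, integral_cos]
  have h1 : Real.sin ((k : ℝ) * π) = 0 := Real.sin_nat_mul_pi k
  rw [mul_neg, Real.sin_neg, h1]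
  simp

private lemma cont_Wk (n : ℕ) : Continuous (Wk n) := by
  unfold Wk
  fun_prop

private lemma int_Wk (n : ℕ) : ∫ t in (-π)..π, Wk n t = 2 * π * n := by
  unfold Wk
  have hint : ∀ k : ℕ, IntervalIntegrable (fun t => ((n : ℝ) - k) * Real.cos (k * t))
      MeasureTheory.volume (-π) π :=
    fun k => (by fun_prop :
      Continuous fun t => ((n : ℝ) - k) * Real.cos ((k : ℝ) * t)).intervalIntegrable _ _
  rw [intervalIntegral.integral_add intervalIntegrable_const
      ((by fun_prop : Continuous fun t => 2 * ∑ k ∈ Finset.Icc 1 n,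
        ((n : ℝ) - k) * Real.cos ((k : ℝ) * t)).intervalIntegrable _ _),
    intervalIntegral.integral_const_mul,
    intervalIntegral.integral_finset_sum (fun k _ => hint k)]
  have h0 : ∀ k ∈ Finset.Icc 1 n, (∫ t in (-π)..π, ((n : ℝ) - k) * Real.cos (k * t)) = 0 := by
    intro k hk
    rw [intervalIntegral.integral_const_mul, int_cos k (Finset.mem_Icc.mp hk).1, mul_zero]
  rw [Finset.sum_congr rfl h0, Finset.sum_const_zero, mul_zero, add_zero,
    intervalIntegral.integral_const, smul_eq_mul]
  ring

/-- The Vallée-Poussin kernel `V_m` has `L¹` norm over a period at most `3π`. -/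
theorem stmt_8 (m : ℕ) (hm : 1 ≤ m)
    (V : ℝ → ℝ)
    (hV : ∀ t, V t = 1 / 2 + ∑ k ∈ Finset.Icc 1 m, Real.cos (k * t) +
      2 * ∑ k ∈ Finset.Icc (m + 1) (2 * m - 1),
        (1 - (k : ℝ) / (2 * m)) * Real.cos (k * t)) :
    ∫ t in (-π)..π, |V t| ≤ 3 * π := by
  have hm0 : (m : ℝ) ≠ 0 := by positivity
  have h2m0 : (2 * (m : ℝ)) ≠ 0 := by positivity
  -- pointwise identity V = (1/(2m)) (W(2m) - W(m))
  have hVW : ∀ t, V t = (1 / (2 * m)) * (Wk (2 * m) t - Wk m t) := by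
    intro t
    have hsplit : ∑ k ∈ Finset.Icc 1 (2 * m), ((2 * (m : ℝ)) - k) * Real.cos (k * t)
        = (∑ k ∈ Finset.Icc 1 m, ((2 * (m : ℝ)) - k) * Real.cos (k * t))
          + ∑ k ∈ Finset.Icc (m + 1) (2 * m), ((2 * (m : ℝ)) - k) * Real.cos (k * t) := by
      rw [← Finset.sum_union (by
        simp only [Finset.disjoint_left, Finset.mem_Icc]; omega)]
      apply Finset.sum_congr _ (fun _ _ => rfl)
      ext k
      simp only [Finset.mem_union, Finset.mem_Icc]
      omega
    have htop : ∑ k ∈ Finset.Icc (m + 1) (2 * m), ((2 * (m : ℝ)) - k) * Real.cos (k * t)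
        = ∑ k ∈ Finset.Icc (m + 1) (2 * m - 1), ((2 * (m : ℝ)) - k) * Real.cos (k * t) := by
      have h2m : 2 * m = (2 * m - 1) + 1 := by omega
      rw [h2m, Finset.sum_Icc_succ_top (by omega), ← h2m]
      have : ((2 * (m : ℝ)) - (2 * m : ℕ)) = 0 := by push_cast; ring
      rw [this, zero_mul, add_zero]
    have hB : ∑ k ∈ Finset.Icc (m + 1) (2 * m - 1), ((2 * (m : ℝ)) - k) * Real.cos (k * t)
        = (2 * (m : ℝ)) * ∑ k ∈ Finset.Icc (m + 1) (2 * m - 1),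
            (1 - (k : ℝ) / (2 * m)) * Real.cos (k * t) := by
      rw [Finset.mul_sum]
      apply Finset.sum_congr rfl
      intro k _
      field_simp
    have hA : ∑ k ∈ Finset.Icc 1 m, ((2 * (m : ℝ)) - k) * Real.cos (k * t)
        = (∑ k ∈ Finset.Icc 1 m, ((m : ℝ) - k) * Real.cos (k * t))
          + (m : ℝ) * ∑ k ∈ Finset.Icc 1 m, Real.cos ((k : ℝ) * t) := by
      rw [Finset.mul_sum, ← Finset.sum_add_distrib]
      apply Finset.sum_congr rfl
      intro k _
      ring
    rw [hV t]
    unfold Wk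
    push_cast
    rw [hsplit, htop, hB, hA]
    rw [show (1:ℝ) / (2 * m) = (2 * (m:ℝ))⁻¹ from one_div _, eq_inv_mul_iff_mul_eq₀ h2m0]
    ring
  -- integrability
  have hVcont : Continuous V := by
    have hfe : V = fun t => (1 / (2 * m)) * (Wk (2 * m) t - Wk m t) := funext hVW
    rw [hfe]
    exact continuous_const.mul ((cont_Wk (2 * m)).sub (cont_Wk m))
  have hle : ∫ t in (-π)..π, |V t|
      ≤ ∫ t in (-π)..π, (1 / (2 * m)) * (Wk (2 * m) t + Wk m t) := by
    apply intervalIntegral.integral_mono_on (by linarith [Real.pi_pos])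
    · exact hVcont.abs.intervalIntegrable _ _
    · exact (continuous_const.mul ((cont_Wk (2 * m)).add (cont_Wk m))).intervalIntegrable _ _
    · intro t _
      rw [hVW t, abs_mul, abs_of_nonneg (by positivity : (0:ℝ) ≤ 1 / (2 * m))]
      apply mul_le_mul_of_nonneg_left _ (by positivity)
      calc |Wk (2 * m) t - Wk m t| ≤ |Wk (2 * m) t| + |Wk m t| := abs_sub _ _
        _ = Wk (2 * m) t + Wk m t := by
            rw [abs_of_nonneg (Wk_nonneg _ _), abs_of_nonneg (Wk_nonneg _ _)]
  have hint : ∫ t in (-π)..π, (1 / (2 * m)) * (Wk (2 * m) t + Wk m t) = 3 * π := by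
    rw [intervalIntegral.integral_const_mul,
      intervalIntegral.integral_add ((cont_Wk (2 * m)).intervalIntegrable _ _)
        ((cont_Wk m).intervalIntegrable _ _),
      int_Wk, int_Wk]
    push_cast
    field_simp
    ring
  linarith [hle, hint.le, hint.ge]
end

section
/- Let ψ : [1,∞) → (0,∞) be positive, continuous, convex and decreasing with Σ_{k=1}^∞ ψ(k) < ∞. Let g(t) = ψ(t)t and suppose there are constants 0 < K₁ ≤ K₂ such that K₁ ≤ g(t)/(t|g'(t+0)|) ≤ K₂ for all t ≥ 1. Then there exist constants 0 < c ≤ C (depending only on K₁, K₂) such that for all n ∈ ℕ, c·ψ(n)·n ≤ Σ_{k=n}^∞ ψ(k) ≤ C·ψ(n)·n. -/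
open Set

open Filter Finset Topology

set_option maxHeartbeats 4000000 in
/-- If `g(t) = ψ(t) t` has its characteristic `g(t)/(t |g'(t+0)|)` bounded between
`K₁` and `K₂` on `[1,∞)` (i.e. `g ∈ 𝔐_C`), then `∑_{k=n}^∞ ψ(k) ≍ ψ(n) n`. -/
theorem stmt_12 (ψ : ℝ → ℝ)
    (hψpos : ∀ t ∈ Ici (1 : ℝ), 0 < ψ t)
    (hψcont : ContinuousOn ψ (Ici (1 : ℝ)))
    (hψconv : ConvexOn ℝ (Ici (1 : ℝ)) ψ)
    (hψdec : AntitoneOn ψ (Ici (1 : ℝ)))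
    (hsum : Summable (fun k : ℕ => ψ k))
    (g : ℝ → ℝ) (hg : ∀ t, g t = ψ t * t)
    (K₁ K₂ : ℝ) (hK₁ : 0 < K₁) (hK₁₂ : K₁ ≤ K₂)
    (hchar : ∀ t : ℝ, 1 ≤ t →
      K₁ ≤ g t / (t * |derivWithin g (Ici t) t|) ∧
      g t / (t * |derivWithin g (Ici t) t|) ≤ K₂) :
    ∃ c C : ℝ, 0 < c ∧ c ≤ C ∧ ∀ n : ℕ, 1 ≤ n →
      c * (ψ n * n) ≤ (∑' k : ℕ, ψ (n + k)) ∧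
      (∑' k : ℕ, ψ (n + k)) ≤ C * (ψ n * n) := by
  classical
  set D : ℝ → ℝ := fun t => derivWithin g (Ici t) t with hDdef
  have hK₂ : 0 < K₂ := lt_of_lt_of_le hK₁ hK₁₂
  have tpos : ∀ t : ℝ, 1 ≤ t → (0:ℝ) < t := fun t ht => lt_of_lt_of_le one_pos ht
  have gpos : ∀ t : ℝ, 1 ≤ t → 0 < g t := fun t ht => by
    rw [hg]; exact mul_pos (hψpos t ht) (tpos t ht)
  have habs : ∀ t : ℝ, 1 ≤ t → 0 < t * |D t| := by
    intro t ht
    rcases (mul_nonneg (tpos t ht).le (abs_nonneg (D t))).lt_or_eq with h | h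
    · exact h
    · exfalso
      have h1 := (hchar t ht).1
      rw [← h, div_zero] at h1
      exact absurd h1 (not_le.2 hK₁)
  have hDne : ∀ t : ℝ, 1 ≤ t → D t ≠ 0 := by
    intro t ht h0
    have := habs t ht
    rw [h0, abs_zero, mul_zero] at this
    exact lt_irrefl _ this
  have hdiff : ∀ t : ℝ, 1 ≤ t → HasDerivWithinAt g (D t) (Ici t) t := by
    intro t ht
    by_cases hd : DifferentiableWithinAt ℝ g (Ici t) t
    · exact hd.hasDerivWithinAt
    · exact absurd (derivWithin_zero_of_not_differentiableWithinAt hd) (hDne t ht)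
  have hbound₁ : ∀ t : ℝ, 1 ≤ t → K₁ * (t * |D t|) ≤ g t := by
    intro t ht
    have h1 := (hchar t ht).1
    rw [le_div_iff₀ (habs t ht)] at h1
    linarith
  have hbound₂ : ∀ t : ℝ, 1 ≤ t → g t ≤ K₂ * (t * |D t|) := by
    intro t ht
    have h1 := (hchar t ht).2
    rw [div_le_iff₀ (habs t ht)] at h1
    linarith
  -- the right derivative of ψ
  set P : ℝ → ℝ := fun t => (D t * t - g t) / t ^ 2 with hPdef
  have hψdiff : ∀ t : ℝ, 1 ≤ t → HasDerivWithinAt ψ (P t) (Ici t) t := by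
    intro t ht
    have htne : t ≠ 0 := (tpos t ht).ne'
    have h1 : HasDerivWithinAt (fun x => g x / x) ((D t * t - g t * 1) / t ^ 2) (Ici t) t :=
      (hdiff t ht).div (hasDerivWithinAt_id t _) htne
    have h2 : ∀ x ∈ Ici t, ψ x = g x / x := by
      intro x hx
      have hx0 : x ≠ 0 := (tpos x (le_trans ht hx)).ne'
      rw [hg]; field_simp
    have h3 := h1.congr h2 (h2 t self_mem_Ici)
    simpa [hPdef] using h3
  have hDP : ∀ t : ℝ, 1 ≤ t → D t = P t * t + ψ t := by
    intro t ht
    have htne : t ≠ 0 := (tpos t ht).ne'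
    have hgt := hg t
    simp only [hPdef]
    field_simp
    nlinarith [hgt]
  have slope_tendsto : ∀ a : ℝ, 1 ≤ a → Tendsto (slope ψ a) (𝓝[>] a) (𝓝 (P a)) := by
    intro a ha
    have h := hasDerivWithinAt_iff_tendsto_slope.1 (hψdiff a ha)
    rwa [Ici_sdiff_left] at h
  have L1 : ∀ a b : ℝ, 1 ≤ a → a < b → P a ≤ (ψ b - ψ a) / (b - a) := by
    intro a b ha hab
    refine le_of_tendsto (slope_tendsto a ha) ?_
    filter_upwards [Ioo_mem_nhdsGT_of_mem ⟨le_refl a, hab⟩] with u hu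
    rw [slope_def_field]
    exact hψconv.secant_mono ha (le_trans ha hu.1.le) (le_trans ha hab.le)
      hu.1.ne' hab.ne' hu.2.le
  have L2 : ∀ a b : ℝ, 1 ≤ a → a < b → (ψ b - ψ a) / (b - a) ≤ P b := by
    intro a b ha hab
    have hb : 1 ≤ b := le_trans ha hab.le
    refine ge_of_tendsto (slope_tendsto b hb) ?_
    filter_upwards [self_mem_nhdsWithin] with u hu
    rw [slope_def_field]
    exact hψconv.slope_mono_adjacent ha (le_trans hb (le_of_lt hu)) hab hu
  have Pmono : ∀ a b : ℝ, 1 ≤ a → a ≤ b → P a ≤ P b := by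
    intro a b ha hab
    rcases hab.lt_or_eq with h | rfl
    · exact (L1 a b ha h).trans (L2 a b ha h)
    · exact le_refl _
  -- continuity of g
  have gcont : ContinuousOn g (Ici (1:ℝ)) := by
    have h : ContinuousOn (fun t : ℝ => ψ t * t) (Ici (1:ℝ)) := hψcont.mul continuousOn_id
    exact h.congr (fun x _ => hg x)
  -- the right derivative of g is everywhere negative
  have Dneg : ∀ t : ℝ, 1 ≤ t → D t < 0 := by
    intro t₀ ht₀
    by_contra hpos
    push_neg at hpos
    have hDt₀ : 0 < D t₀ := lt_of_le_of_ne hpos (Ne.symm (hDne t₀ ht₀))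
    set S : Set ℝ := {u | t₀ ≤ u ∧ ∀ s, t₀ ≤ s → s ≤ u → 0 < D s} with hSdef
    have ht₀S : t₀ ∈ S := ⟨le_refl _, fun s h1 h2 => by rw [le_antisymm h2 h1]; exact hDt₀⟩
    -- given that D > 0 on [t₀, b], g is ≥ g t₀ there
    have hgmono : ∀ b : ℝ, t₀ ≤ b → (∀ s, t₀ ≤ s → s ≤ b → 0 < D s) → g t₀ ≤ g b := by
      intro b hb hDb
      have key := image_le_of_deriv_right_le_deriv_boundary
        (f := fun x => -g x) (f' := fun x => -D x) (a := t₀) (b := b)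
        (B := fun _ => -g t₀) (B' := fun _ => 0)
        ((gcont.mono (fun x hx => le_trans ht₀ hx.1)).neg)
        (fun x hx => (hdiff x (le_trans ht₀ hx.1)).neg)
        (le_refl _) continuousOn_const
        (fun x _ => hasDerivWithinAt_const x _ _)
        (fun x hx => by
          have := hDb x hx.1 hx.2.le
          show -D x ≤ 0
          linarith)
      have h2 := key (right_mem_Icc.2 hb)
      linarith
    by_cases hbdd : BddAbove S
    · -- bounded: look at the supremum
      have hSne : S.Nonempty := ⟨t₀, ht₀S⟩
      set T := sSup S with hTdef
      have hTt₀ : t₀ ≤ T := le_csSup hbdd ht₀S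
      have hT1 : 1 ≤ T := le_trans ht₀ hTt₀
      have hDlt : ∀ s, t₀ ≤ s → s < T → 0 < D s := by
        intro s h1 h2
        rcases exists_lt_of_lt_csSup hSne h2 with ⟨u, huS, hsu⟩
        exact huS.2 s h1 hsu.le
      have hDT : 0 < D T := by
        rcases (hDne T hT1).lt_or_gt with hneg | hposT
        · exfalso
          have hTgt : t₀ < T := by
            rcases hTt₀.lt_or_eq with h | h
            · exact h
            · exfalso; rw [← h] at hneg; linarith
          have hT1' : 1 < T := lt_of_le_of_lt ht₀ hTgt
          -- continuity of s ↦ P T * s + ψ s from the left at T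
          have hψT : Tendsto ψ (𝓝[<] T) (𝓝 (ψ T)) := by
            have h1 : Tendsto ψ (𝓝[Ici (1:ℝ)] T) (𝓝 (ψ T)) := hψcont T hT1
            have h2 : Tendsto ψ (𝓝[Ioo (1:ℝ) T] T) (𝓝 (ψ T)) :=
              h1.mono_left (nhdsWithin_mono _ (fun x hx => hx.1.le))
            rwa [nhdsWithin_Ioo_eq_nhdsLT hT1'] at h2
          have hcont : Tendsto (fun s => P T * s + ψ s) (𝓝[<] T) (𝓝 (P T * T + ψ T)) := by
            have h1 : Tendsto (fun s : ℝ => P T * s) (𝓝[<] T) (𝓝 (P T * T)) :=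
              ((continuous_const.mul continuous_id).tendsto T).mono_left nhdsWithin_le_nhds
            exact h1.add hψT
          have hlim : P T * T + ψ T = D T := (hDP T hT1).symm
          rw [hlim] at hcont
          have hev1 : ∀ᶠ s in 𝓝[<] T, P T * s + ψ s < 0 := hcont.eventually_lt_const hneg
          have hev2 : ∀ᶠ s in 𝓝[<] T, t₀ < s :=
            eventually_nhdsWithin_of_eventually_nhds (eventually_gt_nhds hTgt)
          have hev3 : ∀ᶠ s in 𝓝[<] T, s < T := eventually_mem_nhdsWithin
          rcases (hev1.and (hev2.and hev3)).exists with ⟨s, hs1, hs2, hs3⟩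
          have hs1' : 1 ≤ s := le_trans ht₀ hs2.le
          have h4 : D s ≤ P T * s + ψ s := by
            have h5 := Pmono s T hs1' hs3.le
            have h6 := hDP s hs1'
            nlinarith [tpos s hs1']
          have := hDlt s hs2.le hs3
          linarith
        · exact hposT
      -- extend positivity past T, contradiction with sSup
      have hψT : Tendsto ψ (𝓝[≥] T) (𝓝 (ψ T)) := by
        have h1 : Tendsto ψ (𝓝[Ici (1:ℝ)] T) (𝓝 (ψ T)) := hψcont T hT1
        exact h1.mono_left (nhdsWithin_mono _ (fun x hx => le_trans hT1 hx))
      have hcont : Tendsto (fun s => P T * s + ψ s) (𝓝[≥] T) (𝓝 (D T)) := by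
        have h1 : Tendsto (fun s : ℝ => P T * s) (𝓝[≥] T) (𝓝 (P T * T)) :=
          ((continuous_const.mul continuous_id).tendsto T).mono_left nhdsWithin_le_nhds
        have h2 := h1.add hψT
        rwa [← hDP T hT1] at h2
      have hev : ∀ᶠ s in 𝓝[≥] T, 0 < P T * s + ψ s := hcont.eventually_const_lt hDT
      rcases mem_nhdsGE_iff_exists_Icc_subset.1 hev with ⟨b, hTb, hb⟩
      have hbS : b ∈ S := by
        refine ⟨hTt₀.trans hTb.le, ?_⟩
        intro s h1 h2
        rcases lt_or_ge s T with h | h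
        · exact hDlt s h1 h
        · have hs1 : 1 ≤ s := hT1.trans h
          have h4 : 0 < P T * s + ψ s := hb ⟨h, h2⟩
          have h5 := Pmono T s hT1 h
          have h6 := hDP s hs1
          nlinarith [tpos s hs1]
      have := le_csSup hbdd hbS
      linarith
    · -- unbounded: D > 0 on all of [t₀, ∞), contradicting summability
      have hDposAll : ∀ s, t₀ ≤ s → 0 < D s := by
        intro s hs
        rcases not_bddAbove_iff.1 hbdd s with ⟨u, huS, hsu⟩
        exact huS.2 s hs hsu.le
      have hge : ∀ b : ℝ, t₀ ≤ b → g t₀ ≤ g b := fun b hb =>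
        hgmono b hb (fun s h1 _ => hDposAll s h1)
      -- now ψ k ≥ g t₀ / k for large k, contradicting summability
      set N := ⌈t₀⌉₊ with hNdef
      have hN : t₀ ≤ N := Nat.le_ceil t₀
      have hsum1 : Summable (fun k : ℕ => ψ (((k + N : ℕ) : ℝ))) :=
        (summable_nat_add_iff N).2 hsum
      have hsum2 : Summable (fun k : ℕ => g t₀ / ((k + N : ℕ) : ℝ)) := by
        apply Summable.of_nonneg_of_le (fun k => ?_) (fun k => ?_) hsum1
        · have h0 : (0:ℝ) < ((k + N : ℕ):ℝ) := lt_of_lt_of_le (lt_of_lt_of_le one_pos ht₀)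
            (le_trans hN (by exact_mod_cast Nat.le_add_left N k))
          exact div_nonneg (gpos t₀ ht₀).le h0.le
        · have hk : t₀ ≤ ((k + N : ℕ):ℝ) := le_trans hN (by exact_mod_cast Nat.le_add_left N k)
          have hk1 : (1:ℝ) ≤ ((k + N : ℕ):ℝ) := le_trans ht₀ hk
          rw [div_le_iff₀ (lt_of_lt_of_le one_pos hk1), ← hg]
          exact hge _ hk
      have hsum3 : Summable (fun k : ℕ => (g t₀)⁻¹ * (g t₀ / ((k + N : ℕ) : ℝ))) :=
        hsum2.mul_left _
      have hsum4 : Summable (fun k : ℕ => 1 / ((k + N : ℕ) : ℝ)) := by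
        apply hsum3.congr
        intro k
        have hgt₀ : g t₀ ≠ 0 := (gpos t₀ ht₀).ne'
        field_simp
      have hsum5 : Summable (fun k : ℕ => 1 / (k : ℝ)) := (summable_nat_add_iff N).1 hsum4
      exact Real.not_summable_one_div_natCast hsum5
  -- consequences of the characteristic bounds, with signs
  have hDub : ∀ t : ℝ, 1 ≤ t → D t ≤ -(g t / (K₂ * t)) := by
    intro t ht
    have h2 := hbound₂ t ht
    rw [abs_of_neg (Dneg t ht)] at h2
    have h3 : g t / (K₂ * t) ≤ -D t := by
      rw [div_le_iff₀ (mul_pos hK₂ (tpos t ht))]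
      calc g t ≤ K₂ * (t * -D t) := h2
        _ = -D t * (K₂ * t) := by ring
    linarith
  have hDlb : ∀ t : ℝ, 1 ≤ t → |D t| ≤ g t / (K₁ * t) := by
    intro t ht
    have h1 := hbound₁ t ht
    rw [le_div_iff₀ (mul_pos hK₁ (tpos t ht))]
    calc |D t| * (K₁ * t) = K₁ * (t * |D t|) := by ring
      _ ≤ g t := h1
  -- the logarithmic derivative
  have hlogd : ∀ x : ℝ, 1 ≤ x →
      HasDerivWithinAt (fun y => Real.log (g y)) ((g x)⁻¹ * D x) (Ici x) x := by
    intro x hx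
    exact (Real.hasDerivAt_log (gpos x hx).ne').comp_hasDerivWithinAt x (hdiff x hx)
  have hlogcont : ∀ m b : ℝ, 1 ≤ m → ContinuousOn (fun y => Real.log (g y)) (Icc m b) := by
    intro m b hm
    exact ContinuousOn.log (gcont.mono (fun x hx => le_trans hm hx.1))
      (fun x hx => (gpos x (le_trans hm hx.1)).ne')
  -- dyadic decay of g
  set q : ℝ := Real.exp (-(Real.log 2 / K₂)) with hqdef
  have hq0 : 0 < q := Real.exp_pos _
  have hq1 : q < 1 := by
    rw [hqdef, Real.exp_lt_one_iff]
    have := Real.log_pos (by norm_num : (1:ℝ) < 2)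
    have := div_pos this hK₂
    linarith
  have dyadic : ∀ m : ℝ, 1 ≤ m → g (2 * m) ≤ q * g m := by
    intro m hm
    have hm0 : (0:ℝ) < m := tpos m hm
    have h2m : m < 2 * m := by linarith
    have hBcont : ContinuousOn (fun s : ℝ => Real.log (g m) - (Real.log s - Real.log m) / K₂)
        (Icc m (2 * m)) := by
      have hsub : Icc m (2 * m) ⊆ {(0:ℝ)}ᶜ := by
        intro x hx
        have : (0:ℝ) < x := lt_of_lt_of_le hm0 hx.1
        simpa using this.ne'
      have h1 : ContinuousOn Real.log (Icc m (2 * m)) := Real.continuousOn_log.mono hsub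
      exact continuousOn_const.sub ((h1.sub continuousOn_const).div_const K₂)
    have hBderiv : ∀ x ∈ Ico m (2 * m),
        HasDerivWithinAt (fun s : ℝ => Real.log (g m) - (Real.log s - Real.log m) / K₂)
          (-(x⁻¹ / K₂)) (Ici x) x := by
      intro x hx
      have hx0 : x ≠ 0 := (lt_of_lt_of_le hm0 hx.1).ne'
      have h2 := ((Real.hasDerivAt_log hx0).sub_const (Real.log m)).div_const K₂
      have h3 := (hasDerivAt_const x (Real.log (g m))).sub h2
      have h4 : 0 - x⁻¹ / K₂ = -(x⁻¹ / K₂) := by ring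
      rw [h4] at h3
      exact h3.hasDerivWithinAt
    have hfderiv : ∀ x ∈ Ico m (2 * m),
        HasDerivWithinAt (fun y => Real.log (g y)) ((g x)⁻¹ * D x) (Ici x) x :=
      fun x hx => hlogd x (le_trans hm hx.1)
    have hbound : ∀ x ∈ Ico m (2 * m), (g x)⁻¹ * D x ≤ -(x⁻¹ / K₂) := by
      intro x hx
      have hx1 : 1 ≤ x := le_trans hm hx.1
      have hgx := gpos x hx1
      have h1 := hDub x hx1
      have h2 := mul_le_mul_of_nonneg_left h1 (inv_nonneg.2 hgx.le)
      have h3 : (g x)⁻¹ * -(g x / (K₂ * x)) = -(x⁻¹ / K₂) := by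
        field_simp
      rw [h3] at h2
      exact h2
    have hstart : Real.log (g m) ≤ Real.log (g m) - (Real.log m - Real.log m) / K₂ := by
      simp
    have key := image_le_of_deriv_right_le_deriv_boundary
      (hlogcont m (2 * m) hm) hfderiv hstart hBcont hBderiv hbound
    have h2 := key (right_mem_Icc.2 h2m.le)
    have hlog2 : Real.log (2 * m) - Real.log m = Real.log 2 := by
      rw [Real.log_mul (by norm_num) hm0.ne']; ring
    have h4 : Real.log (g (2 * m)) ≤ Real.log (g m) - Real.log 2 / K₂ := by
      rw [hlog2] at h2; linarith
    have h5 := Real.exp_le_exp.2 h4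
    rw [Real.exp_log (gpos _ (by linarith : 1 ≤ 2 * m)), Real.exp_sub,
      Real.exp_log (gpos m hm)] at h5
    have h6 : q * g m = g m / Real.exp (Real.log 2 / K₂) := by
      rw [hqdef, Real.exp_neg]; ring
    rw [h6]
    exact h5
  -- g decays by at most a bounded factor over a dyadic interval
  have glow : ∀ m : ℝ, 1 ≤ m → ∀ s ∈ Icc m (2 * m), Real.exp (-(1 / K₁)) * g m ≤ g s := by
    intro m hm s hs
    have hm0 : (0:ℝ) < m := tpos m hm
    have hC : ∀ x ∈ Ico m (2 * m), ‖(g x)⁻¹ * D x‖ ≤ 1 / (K₁ * m) := by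
      intro x hx
      have hx1 : 1 ≤ x := le_trans hm hx.1
      have hgx := gpos x hx1
      have h1 := hDlb x hx1
      have habs1 : ‖(g x)⁻¹ * D x‖ = (g x)⁻¹ * |D x| := by
        rw [Real.norm_eq_abs, abs_mul, abs_of_pos (inv_pos.2 hgx)]
      rw [habs1]
      calc (g x)⁻¹ * |D x| ≤ (g x)⁻¹ * (g x / (K₁ * x)) :=
            mul_le_mul_of_nonneg_left h1 (inv_nonneg.2 hgx.le)
        _ = 1 / (K₁ * x) := by field_simp
        _ ≤ 1 / (K₁ * m) := by
            apply one_div_le_one_div_of_le (mul_pos hK₁ hm0)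
            exact mul_le_mul_of_nonneg_left hx.1 hK₁.le
    have key := norm_image_sub_le_of_norm_deriv_right_le_segment
      (hlogcont m (2 * m) hm) (fun x hx => hlogd x (le_trans hm hx.1)) hC s hs
    have h2 : Real.log (g m) - Real.log (g s) ≤ 1 / K₁ := by
      rw [Real.norm_eq_abs] at key
      have h3 := (abs_le.1 key).1
      have h4 : 1 / (K₁ * m) * (s - m) ≤ 1 / K₁ := by
        have hsm : s - m ≤ m := by have := hs.2; linarith
        have h5 : 1 / (K₁ * m) * (s - m) ≤ 1 / (K₁ * m) * m :=
          mul_le_mul_of_nonneg_left hsm (by positivity)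
        have he : 1 / (K₁ * m) * m = 1 / K₁ := by
          field_simp
        linarith
      linarith
    have h5 := Real.exp_le_exp.2 (by linarith : Real.log (g m) - 1 / K₁ ≤ Real.log (g s))
    rw [Real.exp_log (gpos s (le_trans hm hs.1)), Real.exp_sub,
      Real.exp_log (gpos m hm)] at h5
    have h6 : Real.exp (-(1 / K₁)) * g m = g m / Real.exp (1 / K₁) := by
      rw [Real.exp_neg]; ring
    rw [h6]; exact h5
  -- choose the constants
  set c : ℝ := Real.exp (-(1 / K₁)) / 2 with hcdef
  set Cc : ℝ := 1 / (1 - q) with hCdef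
  have hc0 : 0 < c := by positivity
  have hCc1 : 1 ≤ Cc := by
    rw [hCdef, le_div_iff₀ (by linarith : (0:ℝ) < 1 - q)]
    linarith
  have hcC : c ≤ Cc := by
    have h1 : Real.exp (-(1 / K₁)) ≤ 1 := by
      rw [Real.exp_le_one_iff]
      have : 0 < 1 / K₁ := by positivity
      linarith
    have : c ≤ 1 := by rw [hcdef]; linarith
    linarith
  refine ⟨c, Cc, hc0, hcC, ?_⟩
  intro n hn
  have hn1 : (1:ℝ) ≤ (n:ℝ) := by exact_mod_cast hn
  have hn0 : (0:ℝ) < (n:ℝ) := by linarith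
  have hsummable : ∀ m : ℕ, Summable (fun k : ℕ => ψ ((m:ℝ) + (k:ℝ))) := by
    intro m
    have h := (summable_nat_add_iff (f := fun j : ℕ => ψ (j:ℝ)) m).2 hsum
    exact h.congr (fun k => by push_cast; ring_nf)
  have hterm : ∀ m : ℕ, 1 ≤ m → ∀ k : ℕ, 0 < ψ ((m:ℝ) + (k:ℝ)) := by
    intro m hm k
    have hm1 : (1:ℝ) ≤ (m:ℝ) := by exact_mod_cast hm
    exact hψpos _ (by
      rw [Set.mem_Ici]
      have := Nat.cast_nonneg (α := ℝ) k
      linarith)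
  constructor
  · -- lower bound
    have hfin : ∑ i ∈ Finset.range n, ψ ((n:ℝ) + (i:ℝ)) ≤ ∑' k : ℕ, ψ ((n:ℝ) + (k:ℝ)) :=
      Summable.sum_le_tsum _ (fun i _ => (hterm n hn i).le) (hsummable n)
    have heach : ∀ i ∈ Finset.range n, Real.exp (-(1 / K₁)) * g n / (2 * n) ≤ ψ ((n:ℝ) + (i:ℝ)) := by
      intro i hi
      have hi' : (i:ℝ) < (n:ℝ) := by exact_mod_cast Finset.mem_range.1 hi
      have hi0 : (0:ℝ) ≤ (i:ℝ) := Nat.cast_nonneg i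
      have hmem : (n:ℝ) + (i:ℝ) ∈ Icc (n:ℝ) (2 * n) := ⟨by linarith, by linarith⟩
      have h1 := glow (n:ℝ) hn1 _ hmem
      have hpos : (0:ℝ) < (n:ℝ) + (i:ℝ) := by linarith
      have h2 : ψ ((n:ℝ) + (i:ℝ)) = g ((n:ℝ) + (i:ℝ)) / ((n:ℝ) + (i:ℝ)) := by
        rw [hg]; field_simp
      rw [h2]
      exact div_le_div₀ (gpos _ (by linarith)).le h1 hpos hmem.2
    have hsum2 : (n:ℝ) * (Real.exp (-(1 / K₁)) * g n / (2 * n)) ≤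
        ∑ i ∈ Finset.range n, ψ ((n:ℝ) + (i:ℝ)) := by
      have h3 := Finset.sum_le_sum heach
      rw [Finset.sum_const, Finset.card_range, nsmul_eq_mul] at h3
      exact h3
    have heq : c * (ψ n * n) = (n:ℝ) * (Real.exp (-(1 / K₁)) * g n / (2 * n)) := by
      rw [hcdef, hg]
      field_simp
    rw [heq]
    exact le_trans hsum2 hfin
  · -- upper bound
    have gdecay : ∀ J : ℕ, g (((2 ^ J * n : ℕ) : ℝ)) ≤ q ^ J * g n := by
      intro J
      induction J with
      | zero => simp
      | succ J ih =>
        have hJn1 : (1:ℝ) ≤ ((2 ^ J * n : ℕ) : ℝ) := by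
          have : 1 ≤ 2 ^ J * n := Nat.one_le_iff_ne_zero.2 (by positivity)
          exact_mod_cast this
        have hcast : ((2 ^ (J + 1) * n : ℕ) : ℝ) = 2 * ((2 ^ J * n : ℕ) : ℝ) := by
          push_cast; ring
        rw [hcast]
        calc g (2 * ((2 ^ J * n : ℕ) : ℝ)) ≤ q * g ((2 ^ J * n : ℕ) : ℝ) := dyadic _ hJn1
          _ ≤ q * (q ^ J * g n) := mul_le_mul_of_nonneg_left ih hq0.le
          _ = q ^ (J + 1) * g n := by ring
    have step : ∀ m : ℕ, 1 ≤ m →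
        (∑' k : ℕ, ψ ((m:ℝ) + (k:ℝ))) ≤ g m + ∑' k : ℕ, ψ (((2 * m : ℕ):ℝ) + (k:ℝ)) := by
      intro m hm
      have hm1 : (1:ℝ) ≤ (m:ℝ) := by exact_mod_cast hm
      have hdecomp := Summable.sum_add_tsum_nat_add (f := fun k : ℕ => ψ ((m:ℝ) + (k:ℝ))) m (hsummable m)
      have hre : (∑' k : ℕ, ψ ((m:ℝ) + ((k + m : ℕ):ℝ))) =
          ∑' k : ℕ, ψ (((2 * m : ℕ):ℝ) + (k:ℝ)) := by
        apply tsum_congr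
        intro k
        congr 1
        push_cast
        ring
      have hsum3 : ∑ i ∈ Finset.range m, ψ ((m:ℝ) + (i:ℝ)) ≤ (m:ℝ) * ψ (m:ℝ) := by
        have h4 : ∀ i ∈ Finset.range m, ψ ((m:ℝ) + (i:ℝ)) ≤ ψ (m:ℝ) := by
          intro i _
          exact hψdec (mem_Ici.2 hm1) (mem_Ici.2 (by have := Nat.cast_nonneg (α := ℝ) i; linarith))
            (by have := Nat.cast_nonneg (α := ℝ) i; linarith)
        have h5 := Finset.sum_le_sum h4
        rw [Finset.sum_const, Finset.card_range, nsmul_eq_mul] at h5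
        exact h5
      have hgm : g (m:ℝ) = ψ (m:ℝ) * (m:ℝ) := hg _
      rw [← hdecomp, hre]
      have : (∑ i ∈ Finset.range m, ψ ((m:ℝ) + (i:ℝ))) ≤ g m := by
        rw [hgm]; linarith
      linarith
    have iter : ∀ J : ℕ, (∑' k : ℕ, ψ ((n:ℝ) + (k:ℝ))) ≤
        g n * (∑ j ∈ Finset.range J, q ^ j) + ∑' k : ℕ, ψ (((2 ^ J * n : ℕ):ℝ) + (k:ℝ)) := by
      intro J
      induction J with
      | zero => simp
      | succ J ih =>
        have hJn : 1 ≤ 2 ^ J * n := Nat.one_le_iff_ne_zero.2 (by positivity)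
        have h1 := step (2 ^ J * n) hJn
        have h2 := gdecay J
        have hcast : 2 * (2 ^ J * n) = 2 ^ (J + 1) * n := by ring
        rw [hcast] at h1
        rw [Finset.sum_range_succ, mul_add]
        have hgn := (gpos (n:ℝ) hn1).le
        have h6 : q ^ J * g ((2 ^ J * n : ℕ):ℝ) ≤ q ^ J * (q ^ J * g n) := by
          nlinarith [pow_nonneg hq0.le J]
        nlinarith [pow_nonneg hq0.le J]
    have hgeom : ∀ J : ℕ, (∑ j ∈ Finset.range J, q ^ j) ≤ 1 / (1 - q) := by
      intro J
      rw [geom_sum_eq hq1.ne J]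
      have h1 : (q ^ J - 1) / (q - 1) = (1 - q ^ J) / (1 - q) := by
        rw [← neg_div_neg_eq]; ring_nf
      rw [h1]
      have h2 : (0:ℝ) < 1 - q := by linarith
      rw [div_le_div_iff₀ h2 h2]
      nlinarith [pow_nonneg hq0.le J]
    have keyJ : ∀ J : ℕ, (∑' k : ℕ, ψ ((n:ℝ) + (k:ℝ))) ≤
        g n * (1 / (1 - q)) + ∑' k : ℕ, ψ (((2 ^ J * n : ℕ):ℝ) + (k:ℝ)) := fun J =>
      (iter J).trans (add_le_add_left
        (mul_le_mul_of_nonneg_left (hgeom J) (gpos (n:ℝ) hn1).le) _)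
    have htail : Tendsto (fun m : ℕ => ∑' k : ℕ, ψ ((m:ℝ) + (k:ℝ))) atTop (𝓝 0) := by
      have h := tendsto_sum_nat_add (f := fun j : ℕ => ψ (j:ℝ))
      apply h.congr
      intro m
      exact tsum_congr (fun k => by congr 1; push_cast; ring)
    have hmono : Tendsto (fun J : ℕ => 2 ^ J * n) atTop atTop := by
      apply tendsto_atTop_mono (fun J => Nat.le_mul_of_pos_right (2 ^ J) hn)
      exact tendsto_pow_atTop_atTop_of_one_lt (by norm_num)
    have hcomp := htail.comp hmono
    have hlim : Tendsto (fun J : ℕ => g n * (1 / (1 - q)) +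
        ∑' k : ℕ, ψ (((2 ^ J * n : ℕ):ℝ) + (k:ℝ))) atTop (𝓝 (g n * (1 / (1 - q)) + 0)) :=
      tendsto_const_nhds.add hcomp
    have hfinal := ge_of_tendsto' hlim keyJ
    rw [add_zero] at hfinal
    have heq2 : Cc * (ψ (n:ℝ) * (n:ℝ)) = g (n:ℝ) * (1 / (1 - q)) := by
      rw [hCdef, hg]; ring
    rw [heq2]
    exact hfinal
end

section
/- Let ψ : [1,∞) → (0,∞) be positive, continuous, convex and decreasing with Σ_{k=1}^∞ ψ(k) < ∞. Let g(t) = ψ(t)t, suppose g is decreasing with g(t)/(t|g'(t+0)|) ≥ α_n := inf_{t≥n} α(g;t) > 0 for t ≥ n, and suppose lim_{t→∞} g(t)/(t|g'(t+0)|) = ∞. Then ψ(n)·n = o(Σ_{k=n}^∞ ψ(k)) as n → ∞, i.e. lim_{n→∞} ψ(n)n / Σ_{k=n}^∞ ψ(k) = 0. -/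
open Set Filter

/-- If `g` has right derivative bounded below by `-(g t * p / t)` on `[T, ∞)`, then
`g t * t ^ p` is nondecreasing on `[T, ∞)`. -/
lemma aux_mono_13 (g : ℝ → ℝ) (T : ℝ) (hT : 1 ≤ T) (hgcont : ContinuousOn g (Ici T))
    (hD : ∀ t : ℝ, T ≤ t → HasDerivWithinAt g (derivWithin g (Ici t) t) (Ici t) t)
    (p : ℝ) (hp : 0 < p)
    (hDlb : ∀ t : ℝ, T ≤ t → -(g t * p / t) ≤ derivWithin g (Ici t) t) :
    ∀ a b : ℝ, T ≤ a → a ≤ b → g a * a ^ p ≤ g b * b ^ p := by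
  intro a b ha hab
  have hIcc : Icc a b ⊆ Ici T := fun x hx => le_trans ha hx.1
  have hxpos : ∀ x ∈ Icc a b, (0:ℝ) < x := fun x hx =>
    lt_of_lt_of_le one_pos (hT.trans (hIcc hx))
  have main : ∀ ⦃x⦄, x ∈ Icc a b → -(g x * x ^ p) ≤ -(g a * a ^ p) := by
    apply image_le_of_deriv_right_le_deriv_boundary
      (f := fun x => -(g x * x ^ p))
      (f' := fun x => -(derivWithin g (Ici x) x * x ^ p + g x * (p * x ^ (p - 1))))
      (B := fun _ => -(g a * a ^ p)) (B' := fun _ => 0)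
    · exact ((hgcont.mono hIcc).mul
        (continuousOn_id.rpow_const (fun x hx => Or.inl (hxpos x hx).ne'))).neg
    · intro x hx
      have hx0 : (0:ℝ) < x := hxpos x (Ico_subset_Icc_self hx)
      exact ((hD x (le_trans ha hx.1)).mul
        ((Real.hasDerivAt_rpow_const (Or.inl hx0.ne')).hasDerivWithinAt)).neg
    · exact le_rfl
    · exact continuousOn_const
    · intro x _; exact hasDerivWithinAt_const _ _ _
    · intro x hx
      have hx0 : (0:ℝ) < x := hxpos x (Ico_subset_Icc_self hx)
      have hlb := hDlb x (le_trans ha hx.1)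
      have hrp : (0:ℝ) ≤ x ^ p := Real.rpow_nonneg hx0.le p
      have h1 : -(g x * p / x) * x ^ p ≤ derivWithin g (Ici x) x * x ^ p :=
        mul_le_mul_of_nonneg_right hlb hrp
      have h2 : x ^ (p - 1) = x ^ p / x := Real.rpow_sub_one hx0.ne' p
      have : (0:ℝ) ≤ derivWithin g (Ici x) x * x ^ p + g x * (p * x ^ (p - 1)) := by
        rw [h2]
        have : -(g x * p / x) * x ^ p + g x * (p * (x ^ p / x)) = 0 := by ring
        linarith
      linarith
  have := main (right_mem_Icc.2 hab)
  linarith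

lemma aux_tail_13 (ψ g : ℝ → ℝ) (hg : ∀ t, g t = ψ t * t)
    (hψpos : ∀ t ∈ Ici (1 : ℝ), 0 < ψ t)
    (hsum : Summable (fun k : ℕ => ψ k))
    (A : ℝ) (hA : 1 ≤ A) (n : ℕ) (hn : 1 ≤ n)
    (hmono : ∀ b : ℝ, (n:ℝ) ≤ b → g n * (n:ℝ) ^ (A⁻¹) ≤ g b * b ^ (A⁻¹)) :
    A / 2 * g n ≤ ∑' k : ℕ, ψ (n + k) := by
  have hA0 : (0:ℝ) < A := lt_of_lt_of_le one_pos hA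
  set p : ℝ := A⁻¹ with hpdef
  have hp : 0 < p := inv_pos.2 hA0
  have hn1 : (1:ℝ) ≤ (n:ℝ) := by exact_mod_cast hn
  have hn0 : (0:ℝ) < (n:ℝ) := lt_of_lt_of_le one_pos hn1
  have hgn : 0 < g n := by
    rw [hg]; exact mul_pos (hψpos _ hn1) hn0
  set c : ℝ := g n * (n:ℝ) ^ p with hcdef
  have hc : 0 ≤ c := mul_nonneg hgn.le (Real.rpow_nonneg hn0.le p)
  -- pointwise lower bound for ψ
  have hterm : ∀ k : ℕ, c * ((n:ℝ) + k) ^ (-(1 + p)) ≤ ψ ((n:ℝ) + k) := by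
    intro k
    set t : ℝ := (n:ℝ) + k with htdef
    have ht : (n:ℝ) ≤ t := le_add_of_nonneg_right (Nat.cast_nonneg k)
    have ht0 : (0:ℝ) < t := lt_of_lt_of_le hn0 ht
    have h1 : c ≤ g t * t ^ p := hmono t ht
    have h2 : c * t ^ (-(1 + p)) ≤ g t * t ^ p * t ^ (-(1 + p)) :=
      mul_le_mul_of_nonneg_right h1 (Real.rpow_nonneg ht0.le _)
    have h3 : g t * t ^ p * t ^ (-(1 + p)) = ψ t := by
      rw [mul_assoc, ← Real.rpow_add ht0]
      have : p + -(1 + p) = -1 := by ring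
      rw [this, Real.rpow_neg_one, hg]
      field_simp
    rw [h3] at h2
    exact h2
  -- summability of the tail
  have hs' : Summable (fun k : ℕ => ψ ((n:ℝ) + k)) := by
    have he : (fun k : ℕ => ψ ((n:ℝ) + k)) = fun k : ℕ => ψ ((k + n : ℕ) : ℝ) := by
      funext k; push_cast; ring_nf
    rw [he]
    exact (summable_nat_add_iff n).2 hsum
  -- choose M
  set K : ℕ := ⌈(2:ℝ) ^ A⌉₊ with hKdef
  set M : ℕ := n * K with hMdef
  -- integral comparison
  have hanti : AntitoneOn (fun x : ℝ => x ^ (-(1 + p))) (Icc (n:ℝ) ((n:ℝ) + M)) := by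
    intro x hx y hy hxy
    exact Real.rpow_le_rpow_of_nonpos (lt_of_lt_of_le hn0 hx.1) hxy (by linarith)
  have hintle := hanti.integral_le_sum
  have hne : -(1 + p) ≠ -1 := by
    intro h; apply hp.ne'; linarith
  have h0mem : (0:ℝ) ∉ Set.uIcc (n:ℝ) ((n:ℝ) + (M:ℝ)) := by
    rw [Set.uIcc_of_le (le_add_of_nonneg_right (Nat.cast_nonneg M))]
    intro h
    exact absurd h.1 (by linarith)
  have hint : (∫ x in (n:ℝ)..((n:ℝ) + M), x ^ (-(1 + p)))
      = A * ((n:ℝ) ^ (-p) - ((n:ℝ) + M) ^ (-p)) := by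
    rw [integral_rpow (Or.inr ⟨hne, h0mem⟩)]
    have he : -(1 + p) + 1 = -p := by ring
    rw [he, hpdef]
    field_simp
    ring
  -- (n+M)^(-p) ≤ n^(-p)/2
  have hM2 : ((n:ℝ) + M) ^ (-p) ≤ (n:ℝ) ^ (-p) / 2 := by
    have hK : (2:ℝ) ^ A ≤ (K:ℝ) := by rw [hKdef]; exact Nat.le_ceil _
    have h2A : (0:ℝ) < (2:ℝ) ^ A := Real.rpow_pos_of_pos two_pos A
    have hMn : (2:ℝ) ^ A * (n:ℝ) ≤ (n:ℝ) + M := by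
      have hMc : (M:ℝ) = (n:ℝ) * K := by rw [hMdef]; push_cast; ring
      nlinarith [(Nat.cast_nonneg M : (0:ℝ) ≤ (M:ℝ))]
    have h1 : ((n:ℝ) + M) ^ (-p) ≤ ((2:ℝ) ^ A * (n:ℝ)) ^ (-p) :=
      Real.rpow_le_rpow_of_nonpos (by positivity) hMn (by linarith)
    have h2 : ((2:ℝ) ^ A * (n:ℝ)) ^ (-p) = (n:ℝ) ^ (-p) / 2 := by
      rw [Real.mul_rpow h2A.le hn0.le, ← Real.rpow_mul (by norm_num : (0:ℝ) ≤ 2)]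
      have hexp : A * -p = -1 := by rw [hpdef]; field_simp
      rw [hexp, Real.rpow_neg_one]
      ring
    rw [h2] at h1
    exact h1
  have hnp : (n:ℝ) ^ p * (n:ℝ) ^ (-p) = 1 := by
    rw [← Real.rpow_add hn0]; simp
  have hsum_lb : c * (A * ((n:ℝ) ^ (-p) - ((n:ℝ) + M) ^ (-p)))
      ≤ ∑ i ∈ Finset.range M, ψ ((n:ℝ) + i) :=
    calc c * (A * ((n:ℝ) ^ (-p) - ((n:ℝ) + M) ^ (-p)))
        = c * ∫ x in (n:ℝ)..((n:ℝ) + M), x ^ (-(1 + p)) := by rw [hint]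
      _ ≤ c * ∑ i ∈ Finset.range M, ((n:ℝ) + i) ^ (-(1 + p)) :=
          mul_le_mul_of_nonneg_left hintle hc
      _ = ∑ i ∈ Finset.range M, c * ((n:ℝ) + i) ^ (-(1 + p)) := by rw [Finset.mul_sum]
      _ ≤ ∑ i ∈ Finset.range M, ψ ((n:ℝ) + i) := Finset.sum_le_sum fun i _ => hterm i
  have hpartial : ∑ i ∈ Finset.range M, ψ ((n:ℝ) + i) ≤ ∑' k : ℕ, ψ ((n:ℝ) + k) :=
    Summable.sum_le_tsum _ (fun i _ =>
      (hψpos ((n:ℝ) + i) (mem_Ici.2 (le_trans hn1 (le_add_of_nonneg_right (Nat.cast_nonneg i))))).le) hs'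
  have hstep : A / 2 * g n = c * (A * ((n:ℝ) ^ (-p) / 2)) := by
    rw [hcdef]; linear_combination (-(A / 2) * g (n:ℝ)) * hnp
  have hmid : c * (A * ((n:ℝ) ^ (-p) / 2)) ≤ c * (A * ((n:ℝ) ^ (-p) - ((n:ℝ) + M) ^ (-p))) := by
    apply mul_le_mul_of_nonneg_left _ hc
    apply mul_le_mul_of_nonneg_left _ hA0.le
    linarith
  calc A / 2 * g n = c * (A * ((n:ℝ) ^ (-p) / 2)) := hstep
    _ ≤ c * (A * ((n:ℝ) ^ (-p) - ((n:ℝ) + M) ^ (-p))) := hmid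
    _ ≤ ∑ i ∈ Finset.range M, ψ ((n:ℝ) + i) := hsum_lb
    _ ≤ ∑' k : ℕ, ψ ((n:ℝ) + k) := hpartial

/-- If the characteristic `α(g;t) = g(t)/(t |g'(t+0)|)` of `g(t) = ψ(t) t` is positive and
tends to infinity, then `ψ(n) n = o(∑_{k=n}^∞ ψ(k))` as `n → ∞`. -/
theorem stmt_13 (ψ : ℝ → ℝ)
    (hψpos : ∀ t ∈ Ici (1 : ℝ), 0 < ψ t)
    (hψcont : ContinuousOn ψ (Ici (1 : ℝ)))
    (hψconv : ConvexOn ℝ (Ici (1 : ℝ)) ψ)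
    (hψdec : AntitoneOn ψ (Ici (1 : ℝ)))
    (hsum : Summable (fun k : ℕ => ψ k))
    (g : ℝ → ℝ) (hg : ∀ t, g t = ψ t * t)
    (hgdec : AntitoneOn g (Ici (1 : ℝ)))
    (hpos : ∀ t : ℝ, 1 ≤ t → 0 < g t / (t * |derivWithin g (Ici t) t|))
    (hlim : Tendsto (fun t : ℝ => g t / (t * |derivWithin g (Ici t) t|))
      atTop atTop) :
    Tendsto (fun n : ℕ => ψ n * n / ∑' k : ℕ, ψ (n + k)) atTop (nhds 0) := by
  -- Basic facts about g
  have hgfun : g = fun t => ψ t * t := funext hg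
  have hgc : ContinuousOn g (Ici 1) := by
    rw [hgfun]; exact hψcont.mul continuousOn_id
  have hgpos : ∀ t : ℝ, 1 ≤ t → 0 < g t := fun t ht => by
    rw [hg]; exact mul_pos (hψpos t ht) (lt_of_lt_of_le one_pos ht)
  have hDd : ∀ t : ℝ, 1 ≤ t → HasDerivWithinAt g (derivWithin g (Ici t) t) (Ici t) t := by
    intro t ht
    by_cases h : DifferentiableWithinAt ℝ g (Ici t) t
    · exact h.hasDerivWithinAt
    · exfalso
      have := hpos t ht
      rw [derivWithin_zero_of_not_differentiableWithinAt h] at this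
      simp at this
  have hDneg : ∀ t : ℝ, 1 ≤ t → derivWithin g (Ici t) t < 0 := by
    intro t ht
    have hne : derivWithin g (Ici t) t ≠ 0 := by
      intro h0
      have := hpos t ht
      rw [h0] at this
      simp at this
    have hle : derivWithin g (Ici t) t ≤ 0 := by
      have hsl := hasDerivWithinAt_iff_tendsto_slope.1 (hDd t ht)
      rw [Ici_sdiff_left] at hsl
      refine le_of_tendsto hsl ?_
      filter_upwards [self_mem_nhdsWithin] with y hy
      have hyt : t < y := hy
      have hgy : g y ≤ g t := hgdec (mem_Ici.2 ht) (mem_Ici.2 (ht.trans hyt.le)) hyt.le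
      rw [slope_def_field]
      apply div_nonpos_of_nonpos_of_nonneg <;> linarith
    exact lt_of_le_of_ne hle hne
  rw [Metric.tendsto_atTop]
  intro ε hε
  set A : ℝ := max 1 (4 / ε) with hAdef
  have hA1 : (1:ℝ) ≤ A := le_max_left _ _
  have hA0 : (0:ℝ) < A := lt_of_lt_of_le one_pos hA1
  obtain ⟨T₀, hT₀⟩ := eventually_atTop.1 (hlim.eventually_ge_atTop A)
  set T : ℝ := max 1 T₀ with hTdef
  have hT1 : (1:ℝ) ≤ T := le_max_left _ _
  have halpha : ∀ t : ℝ, T ≤ t → A ≤ g t / (t * |derivWithin g (Ici t) t|) :=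
    fun t ht => hT₀ t ((le_max_right _ _).trans ht)
  have hDlb : ∀ t : ℝ, T ≤ t → -(g t * A⁻¹ / t) ≤ derivWithin g (Ici t) t := by
    intro t ht
    have ht1 : (1:ℝ) ≤ t := hT1.trans ht
    have ht0 : (0:ℝ) < t := lt_of_lt_of_le one_pos ht1
    have hDn := hDneg t ht1
    have habs : |derivWithin g (Ici t) t| = -derivWithin g (Ici t) t := abs_of_neg hDn
    have halp := halpha t ht
    rw [habs, le_div_iff₀ (by nlinarith)] at halp
    have hiA : A * A⁻¹ = 1 := mul_inv_cancel₀ hA0.ne'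
    rw [neg_le, le_div_iff₀ ht0]
    calc -derivWithin g (Ici t) t * t
        = A⁻¹ * (A * (t * -derivWithin g (Ici t) t)) := by
          rw [← mul_assoc, mul_comm A⁻¹ A, hiA]; ring
      _ ≤ A⁻¹ * g t := mul_le_mul_of_nonneg_left halp (inv_pos.2 hA0).le
      _ = g t * A⁻¹ := mul_comm _ _
  have hmono := aux_mono_13 g T hT1 (hgc.mono (Ici_subset_Ici.2 hT1))
    (fun t ht => hDd t (hT1.trans ht)) A⁻¹ (inv_pos.2 hA0) hDlb
  refine ⟨max 1 ⌈T⌉₊, fun n hn => ?_⟩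
  have hn1 : 1 ≤ n := le_trans (le_max_left _ _) hn
  have hn1' : (1:ℝ) ≤ (n:ℝ) := by exact_mod_cast hn1
  have hn0 : (0:ℝ) < (n:ℝ) := lt_of_lt_of_le one_pos hn1'
  have hnT : T ≤ (n:ℝ) := by
    have h1 : (⌈T⌉₊ : ℝ) ≤ (n:ℝ) := by
      exact_mod_cast le_trans (le_max_right 1 ⌈T⌉₊) hn
    exact le_trans (Nat.le_ceil T) h1
  have hS := aux_tail_13 ψ g hg hψpos hsum A hA1 n hn1
    (fun b hb => hmono (n:ℝ) b hnT hb)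
  have hgn : 0 < g n := by
    rw [hg]; exact mul_pos (hψpos _ hn1') hn0
  set S : ℝ := ∑' k : ℕ, ψ ((n:ℝ) + k) with hSdef
  have hSpos : 0 < S := lt_of_lt_of_le (by positivity) hS
  have hratio1 : ψ n * n / S = g n / S := by rw [hg]
  have hratio2 : g n / S ≤ g n / (A / 2 * g n) := by
    apply div_le_div_of_nonneg_left hgn.le (by positivity) hS
  have hratio3 : g n / (A / 2 * g n) = 2 / A := by
    field_simp
  have hfin : ψ n * n / S ≤ 2 / A := by
    rw [hratio1, ← hratio3]; exact hratio2
  have h2A : 2 / A ≤ ε / 2 := by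
    have h4ε : 4 / ε ≤ A := le_max_right _ _
    have h4ε0 : (0:ℝ) < 4 / ε := by positivity
    calc 2 / A ≤ 2 / (4 / ε) := by
          apply div_le_div_of_nonneg_left (by norm_num) h4ε0 h4ε
      _ = ε / 2 := by field_simp; ring
  have hnonneg : 0 ≤ ψ n * n / S :=
    div_nonneg (mul_nonneg (hψpos _ hn1').le hn0.le) hSpos.le
  rw [Real.dist_eq, sub_zero, abs_of_nonneg hnonneg]
  linarith
end
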